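/- arXiv:1509.08010 — 6 statements merged into one kernel-verified Lean document; each statement's English description precedes it below -/
import Mathlib

section
/- For B ⊆ ℕ, the following are equivalent: (i) for every k ∈ ℕ there exist b_1,...,b_k ∈ B with gcd(b_i, b_j) ∣ (j − i) for all 1 ≤ i < j ≤ k; (ii) for every k ∈ ℕ, the set of multiples M_B = ⋃_{b∈B} bℤ contains k consecutive integers. -/
lemma my_gcd_lcm_distrib (a b c : ℕ) (ha : a ≠ 0) (hb : b ≠ 0) (hc : c ≠ 0) :
    Nat.gcd (Nat.lcm a b) c ∣ Nat.lcm (Nat.gcd a c) (Nat.gcd b c) := by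
  have hl : Nat.lcm a b ≠ 0 := Nat.lcm_ne_zero ha hb
  have h1 : Nat.gcd a c ≠ 0 := Nat.gcd_ne_zero_left ha
  have h2 : Nat.gcd b c ≠ 0 := Nat.gcd_ne_zero_left hb
  rw [← Nat.factorization_le_iff_dvd (Nat.gcd_ne_zero_right hc) (Nat.lcm_ne_zero h1 h2),
    Nat.factorization_gcd hl hc, Nat.factorization_lcm h1 h2, Nat.factorization_lcm ha hb,
    Nat.factorization_gcd ha hc, Nat.factorization_gcd hb hc]
  intro p
  simp only [Finsupp.inf_apply, Finsupp.sup_apply]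
  exact le_of_eq (min_max_distrib_right ..)

lemma my_natCast_lcm_dvd {a b : ℕ} {d : ℤ} (ha : (a : ℤ) ∣ d) (hb : (b : ℤ) ∣ d) :
    (Nat.lcm a b : ℤ) ∣ d := by
  have := Int.coe_lcm_dvd_iff.mpr ⟨ha, hb⟩
  rwa [Int.lcm, Int.natAbs_natCast, Int.natAbs_natCast] at this

lemma my_crt2 (m₁ m₂ : ℕ) (a₁ a₂ : ℤ) (h : (Nat.gcd m₁ m₂ : ℤ) ∣ a₁ - a₂) :
    ∃ x : ℤ, (m₁ : ℤ) ∣ x - a₁ ∧ (m₂ : ℤ) ∣ x - a₂ := by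
  obtain ⟨t, ht⟩ := h
  refine ⟨a₁ - m₁ * Nat.gcdA m₁ m₂ * t, ⟨-(Nat.gcdA m₁ m₂ * t), by ring⟩, ?_⟩
  refine ⟨Nat.gcdB m₁ m₂ * t, ?_⟩
  have hb : (Nat.gcd m₁ m₂ : ℤ) = m₁ * Nat.gcdA m₁ m₂ + m₂ * Nat.gcdB m₁ m₂ := by
    exact Nat.gcd_eq_gcd_ab ..
  rw [hb] at ht
  linarith [ht]

lemma my_crt : ∀ (k : ℕ) (m : Fin k → ℕ), (∀ i, m i ≠ 0) → ∀ (a : Fin k → ℤ),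
    (∀ i j, (Nat.gcd (m i) (m j) : ℤ) ∣ a i - a j) →
    ∃ x : ℤ, ∀ i, (m i : ℤ) ∣ x - a i := by
  intro k
  induction k with
  | zero => exact fun m _ a _ => ⟨0, fun i => i.elim0⟩
  | succ n ih =>
    intro m hm a ha
    obtain ⟨x, hx⟩ := ih (fun i => m i.castSucc) (fun i => hm _) (fun i => a i.castSucc)
      (fun i j => ha _ _)
    have key : ∀ (s : Finset (Fin n)),
        (Nat.gcd (s.lcm (fun i : Fin n => m i.castSucc)) (m (Fin.last n)) : ℤ) ∣
          x - a (Fin.last n) := by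
      intro s
      induction s using Finset.induction with
      | empty => simp
      | @insert i s hni ihs =>
        rw [Finset.lcm_insert]
        have h1 : (Nat.gcd (m i.castSucc) (m (Fin.last n)) : ℤ) ∣ x - a (Fin.last n) := by
          have d1 : (Nat.gcd (m i.castSucc) (m (Fin.last n)) : ℤ) ∣ x - a i.castSucc :=
            dvd_trans (Int.natCast_dvd_natCast.mpr (Nat.gcd_dvd_left _ _)) (hx i)
          have heq : x - a (Fin.last n)
              = (x - a i.castSucc) + (a i.castSucc - a (Fin.last n)) := by ring
          rw [heq]
          exact dvd_add d1 (ha i.castSucc (Fin.last n))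
        have hsl : s.lcm (fun i : Fin n => m i.castSucc) ≠ 0 := by
          rw [Ne, Finset.lcm_eq_zero_iff]
          rintro ⟨j, -, hj⟩
          exact hm _ hj
        have hdistrib := my_gcd_lcm_distrib (m i.castSucc)
          (s.lcm (fun i : Fin n => m i.castSucc)) (m (Fin.last n)) (hm _) hsl (hm _)
        exact dvd_trans (Int.natCast_dvd_natCast.mpr hdistrib) (my_natCast_lcm_dvd h1 ihs)
    obtain ⟨y, hy1, hy2⟩ := my_crt2 ((Finset.univ : Finset (Fin n)).lcm
      (fun i : Fin n => m i.castSucc)) (m (Fin.last n)) x (a (Fin.last n)) (key _)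
    refine ⟨y, fun i => ?_⟩
    refine Fin.lastCases (motive := fun i => (m i : ℤ) ∣ y - a i) ?_ (fun j => ?_) i
    · exact hy2
    ·
      have hdL : (m j.castSucc : ℤ) ∣ y - x :=
        dvd_trans (Int.natCast_dvd_natCast.mpr (Finset.dvd_lcm (f := fun i : Fin n => m i.castSucc) (Finset.mem_univ j))) hy1
      have heq : y - a j.castSucc = (y - x) + (x - a j.castSucc) := by ring
      show (m j.castSucc : ℤ) ∣ y - a j.castSucc
      rw [heq]
      exact dvd_add hdL (hx j)

/-- For `B ⊆ ℕ`, the following are equivalent: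
(i) for every `k` there exist `b_1, ..., b_k ∈ B` with `gcd(b_i, b_j) ∣ (j - i)`
for all `i < j`;
(ii) for every `k`, the set of multiples `M_B = ⋃_{b∈B} bℤ` contains `k` consecutive
integers. -/
theorem stmt_1 (B : Set ℕ) (hB : ∀ b ∈ B, 0 < b) :
    (∀ k : ℕ, ∃ b : Fin k → ℕ, (∀ i, b i ∈ B) ∧
        ∀ i j : Fin k, i < j → Nat.gcd (b i) (b j) ∣ (j.val - i.val)) ↔
    (∀ k : ℕ, ∃ n : ℤ, ∀ j : ℕ, j < k → ∃ b ∈ B, (b : ℤ) ∣ (n + j)) := by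
  constructor
  · intro h k
    obtain ⟨b, hbB, hgcd⟩ := h k
    have key : ∀ i j : Fin k, (Nat.gcd (b i) (b j) : ℤ) ∣ (-(i : ℤ)) - (-(j : ℤ)) := by
      have main : ∀ i j : Fin k, i < j →
          (Nat.gcd (b i) (b j) : ℤ) ∣ (-(i : ℤ)) - (-(j : ℤ)) := by
        intro i j hij
        have := Int.natCast_dvd_natCast.mpr (hgcd i j hij)
        have hc : ((j.val - i.val : ℕ) : ℤ) = (j : ℤ) - (i : ℤ) := by
          rw [Int.ofNat_sub (le_of_lt hij)]
        rw [hc] at this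
        have : (-(i : ℤ)) - (-(j : ℤ)) = (j : ℤ) - (i : ℤ) := by ring
        rw [this]
        exact Int.natCast_dvd_natCast.mpr (hgcd i j hij) |>.trans (by rw [hc])
      intro i j
      rcases lt_trichotomy i j with hij | hij | hij
      · exact main i j hij
      · rw [hij]; simp
      · rw [Nat.gcd_comm]
        have := main j i hij
        rw [show (-(i : ℤ)) - (-(j : ℤ)) = -((-(j : ℤ)) - (-(i : ℤ))) by ring]
        exact (this).neg_right
    obtain ⟨x, hx⟩ := my_crt k b (fun i => (hB _ (hbB i)).ne') (fun i => -(i : ℤ)) key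
    refine ⟨x, fun j hj => ?_⟩
    refine ⟨b ⟨j, hj⟩, hbB _, ?_⟩
    have := hx ⟨j, hj⟩
    simpa [sub_neg_eq_add] using this
  · intro h k
    obtain ⟨n, hn⟩ := h k
    choose f hfB hfd using hn
    refine ⟨fun i => f i.val i.isLt, fun i => hfB _ _, ?_⟩
    intro i j hij
    have d1 : (Nat.gcd (f i.val i.isLt) (f j.val j.isLt) : ℤ) ∣ (n + i) :=
      dvd_trans (Int.natCast_dvd_natCast.mpr (Nat.gcd_dvd_left _ _)) (hfd _ _)
    have d2 : (Nat.gcd (f i.val i.isLt) (f j.val j.isLt) : ℤ) ∣ (n + j) :=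
      dvd_trans (Int.natCast_dvd_natCast.mpr (Nat.gcd_dvd_right _ _)) (hfd _ _)
    have d3 : (Nat.gcd (f i.val i.isLt) (f j.val j.isLt) : ℤ) ∣ ((j.val - i.val : ℕ) : ℤ) := by
      have hc : ((j.val - i.val : ℕ) : ℤ) = (n + j) - (n + i) := by
        rw [Int.ofNat_sub (le_of_lt hij)]; ring
      rw [hc]
      exact dvd_sub d2 d1
    exact Int.natCast_dvd_natCast.mp d3
end

section
/- If η = 𝟙_{F_B} : ℤ → {0,1} is the indicator of the B-free integers and η is periodic with period m (η(n+m) = η(n) for all n), and B is primitive, then B is finite and every b ∈ B divides m; in particular lcm(B) divides m. -/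
/-- If `B ⊆ ℕ` is primitive and the indicator `η` of the `B`-free
integers `F_B = ℤ \ ⋃_{b∈B} bℤ` is periodic with period `m ≥ 1` (i.e. `n + m ∈ F_B ↔
n ∈ F_B` for all `n ∈ ℤ`), then `B` is finite, every `b ∈ B` divides `m`, and in
particular `lcm(B)` divides `m`. -/
theorem stmt_6 (B : Set ℕ) (hpos : ∀ b ∈ B, 0 < b)
    (hprim : ∀ b ∈ B, ∀ b' ∈ B, b ≠ b' → ¬ b ∣ b')
    (m : ℕ) (hm : 0 < m)
    (hper : ∀ n : ℤ, ((∀ b ∈ B, ¬ (b : ℤ) ∣ (n + (m : ℤ))) ↔ (∀ b ∈ B, ¬ (b : ℤ) ∣ n))) :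
    B.Finite ∧ (∀ b ∈ B, b ∣ m) ∧ ∀ (hf : B.Finite), hf.toFinset.lcm id ∣ m := by
  -- U n : n is NOT B-free
  set U : ℤ → Prop := fun n => ∃ b ∈ B, (b : ℤ) ∣ n with hU
  have hUper : ∀ n : ℤ, U (n + m) ↔ U n := by
    intro n
    have h1 := hper n
    rw [← not_iff_not] at h1
    push_neg at h1
    exact h1
  have hshift : ∀ (k : ℤ) (n : ℤ), U n → U (n + k * m) := by
    intro k
    induction k using Int.induction_on with
    | zero => intro n h; simpa using h
    | succ i ih =>
      intro n h
      have e : n + ((i : ℤ) + 1) * m = n + (i : ℤ) * m + m := by ring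
      rw [e]
      exact (hUper _).mpr (ih n h)
    | pred i ih =>
      intro n h
      have e : n + (-(i : ℤ) - 1) * m + m = n + (-(i : ℤ)) * m := by ring
      exact (hUper _).mp (by rw [e]; exact ih n h)
  have hdvd : ∀ b ∈ B, b ∣ m := by
    intro b hb
    -- gcd(b, m) = b * gcdA + m * gcdB, so U (gcd b m)
    have hg : (Nat.gcd b m : ℤ) = b * Int.gcdA b m + m * Int.gcdB b m := by
      have := Int.gcd_eq_gcd_ab (b : ℤ) (m : ℤ)
      simpa [Int.gcd_natCast_natCast] using this
    have hUg : U ((Nat.gcd b m : ℤ)) := by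
      have h0 : U ((b : ℤ) * Int.gcdA b m) := ⟨b, hb, Dvd.intro _ rfl⟩
      have := hshift (Int.gcdB b m) _ h0
      rw [hg]
      convert this using 1
      ring
    obtain ⟨b', hb', hd⟩ := hUg
    have hd' : b' ∣ Nat.gcd b m := by exact_mod_cast hd
    have hdb : b' ∣ b := hd'.trans (Nat.gcd_dvd_left b m)
    have heq : b' = b := by
      by_contra hne
      exact hprim b' hb' b hb hne hdb
    have : b ∣ Nat.gcd b m := heq ▸ hd'
    exact this.trans (Nat.gcd_dvd_right b m)
  have hfin : B.Finite := by
    apply Set.Finite.subset (Set.finite_Icc 1 m)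
    intro b hb
    exact Set.mem_Icc.mpr ⟨hpos b hb, Nat.le_of_dvd hm (hdvd b hb)⟩
  refine ⟨hfin, hdvd, fun hf => ?_⟩
  apply Finset.lcm_dvd
  intro b hb
  exact hdvd b (hf.mem_toFinset.mp hb)
end

section
/- Let B = {b_i · 2^i : i ≥ 1} where b_i ≥ 2 for all i. Then the indicator η of the B-free integers is a Toeplitz sequence: for every n ∈ ℤ there exists d ∈ ℕ, d ≥ 1, such that η(n + k·d) = η(n) for all k ∈ ℤ. Specifically, if n ∉ ⋃_i b_i 2^i ℤ and n = m·2^a with m odd, then n + j·b_1·…·b_a·2^{a+1} ∉ ⋃_i b_i 2^i ℤ for all j ∈ ℤ. -/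
private lemma key_lemma (b : ℕ → ℕ)
    (n : ℤ) (hfree : ∀ i : ℕ, 1 ≤ i → ¬ (((b i * 2 ^ i : ℕ) : ℤ) ∣ n))
    (m : ℤ) (hm : Odd m) (a : ℕ) (hn : n = m * 2 ^ a)
    (j : ℤ) (i : ℕ) (hi : 1 ≤ i) :
    ¬ (((b i * 2 ^ i : ℕ) : ℤ) ∣
        (n + j * (∏ t ∈ Finset.Icc 1 a, (b t : ℤ)) * 2 ^ (a + 1))) := by
  intro hdvd
  push_cast at hdvd
  by_cases hia : i ≤ a
  · -- b_i * 2^i divides the added term, hence divides n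
    have h1 : (b i : ℤ) ∣ ∏ t ∈ Finset.Icc 1 a, (b t : ℤ) :=
      Finset.dvd_prod_of_mem _ (Finset.mem_Icc.mpr ⟨hi, hia⟩)
    have h2 : (2 : ℤ) ^ i ∣ 2 ^ (a + 1) := pow_dvd_pow 2 (by omega)
    have h3 : ((b i : ℤ) * 2 ^ i) ∣
        j * (∏ t ∈ Finset.Icc 1 a, (b t : ℤ)) * 2 ^ (a + 1) := by
      have := mul_dvd_mul h1 h2
      calc ((b i : ℤ) * 2 ^ i) ∣
            (∏ t ∈ Finset.Icc 1 a, (b t : ℤ)) * 2 ^ (a + 1) := this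
        _ ∣ j * ((∏ t ∈ Finset.Icc 1 a, (b t : ℤ)) * 2 ^ (a + 1)) := dvd_mul_left _ _
        _ = j * (∏ t ∈ Finset.Icc 1 a, (b t : ℤ)) * 2 ^ (a + 1) := by ring
    have : ((b i : ℤ) * 2 ^ i) ∣ n := by
      have := hdvd.sub h3
      simpa using this
    exact hfree i hi (by push_cast; exact this)
  · -- i ≥ a + 1 : get 2^(a+1) ∣ n, contradicting oddness of m
    have h2 : (2 : ℤ) ^ (a + 1) ∣ (b i : ℤ) * 2 ^ i :=
      Dvd.dvd.mul_left (pow_dvd_pow 2 (by omega)) _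
    have h3 : (2 : ℤ) ^ (a + 1) ∣
        j * (∏ t ∈ Finset.Icc 1 a, (b t : ℤ)) * 2 ^ (a + 1) := dvd_mul_left _ _
    have h4 : (2 : ℤ) ^ (a + 1) ∣ n := by
      have := (h2.trans hdvd).sub h3
      simpa using this
    rw [hn, pow_succ] at h4
    have h5 : (2 : ℤ) ∣ m := by
      have h6 : (2 : ℤ) ^ a ∣ m * 2 ^ a := dvd_mul_left _ _
      rcases h4 with ⟨c, hc⟩
      have : m * 2 ^ a = (2 * c) * 2 ^ a := by rw [hc]; ring
      have hm2 : m = 2 * c := by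
        have h2a : (2 : ℤ) ^ a ≠ 0 := by positivity
        exact mul_right_cancel₀ h2a this
      exact ⟨c, hm2⟩
    rw [Int.odd_iff] at hm
    omega

/-- Let `B = {b_i · 2^i : i ≥ 1}` with `b_i ≥ 2` for all `i ≥ 1`. Then
the indicator `η` of the `B`-free integers is a Toeplitz sequence: for every `n ∈ ℤ`
there exists `d ≥ 1` with `η(n + k·d) = η(n)` for all `k ∈ ℤ`.  Specifically, if
`n ∉ ⋃_i b_i 2^i ℤ` and `n = m·2^a` with `m` odd, then
`n + j·b_1⋯b_a·2^(a+1) ∉ ⋃_i b_i 2^i ℤ` for all `j ∈ ℤ`. -/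
theorem stmt_8 (b : ℕ → ℕ) (hb : ∀ i : ℕ, 1 ≤ i → 2 ≤ b i) :
    (∀ n : ℤ, ∃ d : ℕ, 0 < d ∧ ∀ k : ℤ,
        ((∀ i : ℕ, 1 ≤ i → ¬ (((b i * 2 ^ i : ℕ) : ℤ) ∣ (n + k * (d : ℤ)))) ↔
         (∀ i : ℕ, 1 ≤ i → ¬ (((b i * 2 ^ i : ℕ) : ℤ) ∣ n)))) ∧
    (∀ n : ℤ, (∀ i : ℕ, 1 ≤ i → ¬ (((b i * 2 ^ i : ℕ) : ℤ) ∣ n)) →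
      ∀ m : ℤ, Odd m → ∀ a : ℕ, n = m * 2 ^ a →
      ∀ j : ℤ, ∀ i : ℕ, 1 ≤ i →
        ¬ (((b i * 2 ^ i : ℕ) : ℤ) ∣
            (n + j * (∏ t ∈ Finset.Icc 1 a, (b t : ℤ)) * 2 ^ (a + 1)))) := by
  constructor
  · intro n
    by_cases hfree : ∀ i : ℕ, 1 ≤ i → ¬ (((b i * 2 ^ i : ℕ) : ℤ) ∣ n)
    · -- n is B-free; in particular n ≠ 0
      have hn0 : n ≠ 0 := by
        intro h
        exact hfree 1 le_rfl (h ▸ dvd_zero _)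
      -- write |n| = 2^a * m' with m' odd
      obtain ⟨a, m', hm', hnab⟩ :=
        Nat.exists_eq_pow_mul_and_not_dvd (Int.natAbs_ne_zero.mpr hn0) 2 (by norm_num)
      -- define the integer odd part
      have hsign : n = (n.natAbs : ℤ) ∨ n = -(n.natAbs : ℤ) := Int.natAbs_eq n
      set m : ℤ := if n = (n.natAbs : ℤ) then (m' : ℤ) else -(m' : ℤ) with hmdef
      have hmodd : Odd m := by
        have : Odd (m' : ℤ) := by
          rw [Int.odd_iff]
          omega
        rw [hmdef]
        split_ifs
        · exact this
        · exact this.neg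
      have hneq : n = m * 2 ^ a := by
        rw [hmdef]
        split_ifs with h
        · rw [h, hnab]; push_cast; ring
        · rcases hsign with h' | h'
          · exact absurd h' h
          · rw [h', hnab]; push_cast; ring
      refine ⟨(∏ t ∈ Finset.Icc 1 a, b t) * 2 ^ (a + 1), ?_, ?_⟩
      · have : 0 < ∏ t ∈ Finset.Icc 1 a, b t :=
          Finset.prod_pos (fun t ht => by
            have := hb t (Finset.mem_Icc.mp ht).1; omega)
        positivity
      · intro k
        constructor
        · intro _; exact hfree
        · intro _ i hi hdvd
          refine key_lemma b n hfree m hmodd a hneq k i hi ?_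
          convert hdvd using 2
          push_cast
          ring
    · -- n is divisible by some b_i * 2^i : take d = b_i * 2^i
      push_neg at hfree
      obtain ⟨i, hi, hdvd⟩ := hfree
      refine ⟨b i * 2 ^ i, ?_, ?_⟩
      · have := hb i hi
        positivity
      · intro k
        apply iff_of_false
        · intro h
          exact (h i hi (hdvd.add (Dvd.dvd.mul_left dvd_rfl k))).elim
        · intro h
          exact h i hi hdvd
  · intro n hfree m hm a hn j i hi
    exact key_lemma b n hfree m hm a hn j i hi
end

section
/- Let d ≥ 1, A ⊆ {0,...,d−1}, and B ⊆ ℕ. Suppose for every k ≥ 1 there exist n_k ∈ ℤ and 0 ≤ r_k ≤ d−1 such that A + m·d + r_k ⊆ F_B for all n_k ≤ m ≤ n_k + k. Then for any r ∈ {0,...,d−1} such that r_k = r for infinitely many k, we have A + ℤ·d + r ⊆ F_B. -/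
/-- Let `d ≥ 1`, `A ⊆ {0,...,d-1}` and `B ⊆ ℕ`. Suppose for every
`k ≥ 1` there are `n_k ∈ ℤ` and `0 ≤ r_k ≤ d-1` such that `A + m·d + r_k ⊆ F_B` for
all `n_k ≤ m ≤ n_k + k`.  Then for any `r ∈ {0,...,d-1}` with `r_k = r` for
infinitely many `k`, we have `A + ℤ·d + r ⊆ F_B`. -/
theorem stmt_9 (d : ℕ) (hd : 0 < d) (A : Set ℕ) (hA : ∀ a ∈ A, a < d)
    (B : Set ℕ) (hB : ∀ b ∈ B, 0 < b) (n : ℕ → ℤ) (rk : ℕ → ℕ)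
    (h : ∀ k : ℕ, 1 ≤ k → rk k ≤ d - 1 ∧
        ∀ m : ℤ, n k ≤ m → m ≤ n k + (k : ℤ) →
          ∀ a ∈ A, ∀ b ∈ B, ¬ (b : ℤ) ∣ ((a : ℤ) + m * (d : ℤ) + (rk k : ℤ))) :
    ∀ r : ℕ, r ≤ d - 1 → {k : ℕ | 1 ≤ k ∧ rk k = r}.Infinite →
      ∀ a ∈ A, ∀ m : ℤ, ∀ b ∈ B, ¬ (b : ℤ) ∣ ((a : ℤ) + m * (d : ℤ) + (r : ℤ)) := by
  intro r _ hinf a ha m b hb hdvd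
  obtain ⟨k, hkS, hbk⟩ := hinf.exists_gt b
  obtain ⟨hk1, hkr⟩ := hkS
  have hbpos : 0 < (b : ℤ) := by exact_mod_cast hB b hb
  set q : ℤ := (n k - m) / b with hq
  have h1 : (b : ℤ) * q ≤ n k - m := by
    have := Int.ediv_mul_le (n k - m) (ne_of_gt hbpos)
    linarith [this]
  have h2 : n k - m < (b : ℤ) * (q + 1) := by
    have := Int.lt_ediv_add_one_mul_self (n k - m) hbpos
    linarith [this]
  set m' : ℤ := m + (b : ℤ) * (q + 1) with hm'
  have hge : n k ≤ m' := by simp only [hm']; linarith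
  have hle : m' ≤ n k + (k : ℤ) := by
    have hbk' : (b : ℤ) ≤ (k : ℤ) := by exact_mod_cast hbk.le
    simp only [hm']; nlinarith
  have := (h k hk1).2 m' hge hle a ha b hb
  rw [hkr] at this
  apply this
  have : (a : ℤ) + m' * d + r = ((a : ℤ) + m * d + r) + (b : ℤ) * ((q + 1) * d) := by
    simp only [hm']; ring
  rw [this]
  exact dvd_add hdvd (Dvd.intro _ rfl)
end

section
/- For any b_1,...,b_K ∈ ℕ and any residues r_1,...,r_K with r_k ∈ ℤ/b_kℤ, the natural density of ⋃_{k≤K}(b_kℤ + r_k) is at least the density of ⋃_{k≤K} b_kℤ. (Rogers' inequality: shifted unions of progressions have density at least that of the unshifted union.) -/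
open Finset

lemma count_res (N d : ℕ) (hd : 0 < d) (hdN : d ∣ N) (r : ℤ) :
    ((range N).filter (fun u : ℕ => (d : ℤ) ∣ (u : ℤ) - r)).card = N / d := by
  obtain ⟨c, rfl⟩ := hdN
  have hdz : (d : ℤ) ≠ 0 := by exact_mod_cast hd.ne'
  set r0 : ℕ := (r % (d : ℤ)).toNat with hr0def
  have hr0eq : (r0 : ℤ) = r % (d : ℤ) := Int.toNat_of_nonneg (Int.emod_nonneg r hdz)
  have hr0lt : r0 < d := by
    have h2 : r % (d : ℤ) < d := Int.emod_lt_of_pos r (by exact_mod_cast hd)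
    omega
  have hcond : ∀ u : ℕ, ((d : ℤ) ∣ (u : ℤ) - r) ↔ u % d = r0 := by
    intro u
    have h1 : ((d : ℤ) ∣ (u : ℤ) - r) ↔ (u : ℤ) % d = r % d := by
      rw [← Int.modEq_iff_dvd]; exact ⟨fun h => h.symm, fun h => h.symm⟩
    rw [h1, ← Int.natCast_mod, ← hr0eq]
    exact_mod_cast Iff.rfl
  have hmain : ((range (d * c)).filter (fun u : ℕ => u % d = r0)).card = (range c).card := by
    apply Finset.card_nbij' (fun u => u / d) (fun t => d * t + r0)
    · intro u hu
      simp only [Finset.mem_coe, mem_filter, mem_range] at hu ⊢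
      exact (Nat.div_lt_iff_lt_mul hd).mpr (by rw [mul_comm]; exact hu.1)
    · intro t ht
      simp only [Finset.mem_coe, mem_range] at ht
      simp only [Finset.mem_coe, mem_filter, mem_range]
      constructor
      · calc d * t + r0 < d * t + d := by omega
          _ = d * (t + 1) := by ring
          _ ≤ d * c := Nat.mul_le_mul_left d ht
      · rw [Nat.mul_add_mod]; exact Nat.mod_eq_of_lt hr0lt
    · intro u hu
      simp only [Finset.mem_coe, mem_filter, mem_range] at hu
      rw [← hu.2]
      exact Nat.div_add_mod u d
    · intro t ht
      show (d * t + r0) / d = t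
      rw [Nat.mul_add_div hd, Nat.div_eq_of_lt hr0lt, add_zero]
  calc ((range (d * c)).filter (fun u : ℕ => (d : ℤ) ∣ (u : ℤ) - r)).card
      = ((range (d * c)).filter (fun u : ℕ => u % d = r0)).card := by
        apply Finset.card_bij (fun u _ => u) <;> simp_all [hcond]
    _ = c := hmain.trans (Finset.card_range c)
    _ = d * c / d := (Nat.mul_div_cancel_left c hd).symm

lemma crt_card (A B : ℕ) (hA : 0 < A) (hB : 0 < B) (cop : Nat.Coprime A B)
    (P : ℕ → Prop) (Q : ℕ → ℕ → Prop) [DecidablePred P] [∀ u, DecidablePred (Q u)]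
    (hPQ : ∀ n : ℕ, n < A * B → (P n ↔ Q (n % A) (n % B))) :
    ((range (A * B)).filter P).card = ∑ u ∈ range A, ((range B).filter (Q u)).card := by
  have hprod : ∑ u ∈ range A, ((range B).filter (Q u)).card
      = (((range A) ×ˢ (range B)).filter (fun z => Q z.1 z.2)).card := by
    rw [Finset.card_filter, Finset.sum_product]
    refine Finset.sum_congr rfl fun u _ => ?_
    rw [Finset.card_filter]
  rw [hprod]
  apply Finset.card_nbij (fun n => (n % A, n % B))
  · intro n hn
    simp only [Finset.mem_coe, mem_filter, mem_range, mem_product] at hn ⊢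
    exact ⟨⟨Nat.mod_lt _ hA, Nat.mod_lt _ hB⟩, (hPQ n hn.1).mp hn.2⟩
  · intro n₁ h₁ n₂ h₂ h
    simp only [Finset.mem_coe, mem_filter, mem_range] at h₁ h₂
    simp only [Prod.mk.injEq] at h
    have h1 : n₁ ≡ n₂ [MOD A] := h.1
    have h2 : n₁ ≡ n₂ [MOD B] := h.2
    have h3 := (Nat.modEq_and_modEq_iff_modEq_mul cop).mp ⟨h1, h2⟩
    unfold Nat.ModEq at h3
    rwa [Nat.mod_eq_of_lt h₁.1, Nat.mod_eq_of_lt h₂.1] at h3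
  · rintro ⟨u, v⟩ huv
    simp only [Finset.mem_coe, mem_filter, mem_product, mem_range] at huv
    obtain ⟨⟨hu, hv⟩, hQ⟩ := huv
    obtain ⟨n, hnu, hnv⟩ := Nat.chineseRemainder cop u v
    have hmu : (n % (A * B)) % A = u := by
      rw [Nat.mod_mod_of_dvd _ ⟨B, rfl⟩, hnu]; exact Nat.mod_eq_of_lt hu
    have hmv : (n % (A * B)) % B = v := by
      rw [Nat.mod_mod_of_dvd _ ⟨A, mul_comm A B⟩, hnv]; exact Nat.mod_eq_of_lt hv
    have hlt : n % (A * B) < A * B := Nat.mod_lt _ (Nat.mul_pos hA hB)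
    refine ⟨n % (A * B), ?_, ?_⟩
    · simp only [Finset.mem_coe, mem_filter, mem_range]
      exact ⟨hlt, (hPQ _ hlt).mpr (by rw [hmu, hmv]; exact hQ)⟩
    · simp only [Prod.mk.injEq]
      exact ⟨hmu, hmv⟩

lemma lex_le {K x y j k : ℕ} (hj : j < K) (hk : k < K) (h : x * K + j < y * K + k) :
    x ≤ y := by
  by_contra hxy
  push_neg at hxy
  have h2 : (y + 1) * K ≤ x * K := Nat.mul_le_mul_right K hxy
  rw [add_mul, one_mul] at h2
  omega

lemma coprime_cast_mul_dvd_iff {s t : ℕ} (cop : Nat.Coprime s t) (x : ℤ) :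
    ((s * t : ℕ) : ℤ) ∣ x ↔ (s : ℤ) ∣ x ∧ (t : ℤ) ∣ x := by
  push_cast
  constructor
  · intro h
    exact ⟨dvd_trans (dvd_mul_right _ _) h, dvd_trans (dvd_mul_left _ _) h⟩
  · intro h
    exact (Nat.isCoprime_iff_coprime.mpr cop).mul_dvd h.1 h.2

lemma dvd_shift {d x y r : ℤ} (h : d ∣ x - y) : d ∣ x - r ↔ d ∣ y - r := by
  constructor <;> intro h2
  · have h3 : d ∣ (x - r) - (x - y) := dvd_sub h2 h
    have h4 : (x - r) - (x - y) = y - r := by ring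
    rwa [h4] at h3
  · have h3 : d ∣ (y - r) + (x - y) := dvd_add h2 h
    have h4 : (y - r) + (x - y) = x - r := by ring
    rwa [h4] at h3

lemma dvd_mod_shift {d N : ℕ} (hdN : d ∣ N) (n : ℕ) (x : ℤ) :
    ((d : ℤ) ∣ (n : ℤ) - x) ↔ ((d : ℤ) ∣ ((n % N : ℕ) : ℤ) - x) := by
  apply dvd_shift
  have h1 : ((N : ℕ) : ℤ) ∣ (n : ℤ) - ((n % N : ℕ) : ℤ) := by
    refine ⟨((n / N : ℕ) : ℤ), ?_⟩
    have h := Nat.div_add_mod n N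
    omega
  exact dvd_trans (Int.natCast_dvd_natCast.mpr hdN) h1

lemma dvd_mod_self' {d N : ℕ} (hdN : d ∣ N) (n : ℕ) :
    ((d : ℤ) ∣ (n : ℤ)) ↔ ((d : ℤ) ∣ ((n % N : ℕ) : ℤ)) := by
  have := dvd_mod_shift hdN n 0
  simpa using this

lemma claim_lower (M : ℕ) {K : ℕ} (m : Fin K → ℕ) (w : Fin K → ℕ)
    (hwinj : Function.Injective w) (S T : Finset (Fin K)) (hTS : T ⊆ S) :
    ∑ k ∈ T, ((Finset.range M).filter
      (fun v : ℕ => (m k : ℤ) ∣ (v : ℤ) ∧ ∀ j ∈ S, w j < w k → ¬ (m j : ℤ) ∣ (v : ℤ))).card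
      ≤ ((Finset.range M).filter (fun v : ℕ => ∃ k ∈ T, (m k : ℤ) ∣ (v : ℤ))).card := by
  classical
  set D : Fin K → Finset ℕ := fun k => (Finset.range M).filter
      (fun v : ℕ => (m k : ℤ) ∣ (v : ℤ) ∧ ∀ j ∈ S, w j < w k → ¬ (m j : ℤ) ∣ (v : ℤ)) with hD
  have hdisj : ∀ x ∈ T, ∀ y ∈ T, x ≠ y → Disjoint (D x) (D y) := by
    intro x hx y hy hxy
    have hwxy : w x ≠ w y := fun he => hxy (hwinj he)
    rcases Nat.lt_or_ge (w x) (w y) with h | h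
    · rw [Finset.disjoint_left]
      intro v hvx hvy
      simp only [hD, Finset.mem_filter] at hvx hvy
      exact hvy.2.2 x (hTS hx) h hvx.2.1
    · have h' : w y < w x := lt_of_le_of_ne h (Ne.symm hwxy)
      rw [Finset.disjoint_left]
      intro v hvx hvy
      simp only [hD, Finset.mem_filter] at hvx hvy
      exact hvx.2.2 y (hTS hy) h' hvy.2.1
  calc ∑ k ∈ T, (D k).card = (T.biUnion D).card := (Finset.card_biUnion hdisj).symm
    _ ≤ _ := by
        apply Finset.card_le_card
        intro v hv
        simp only [Finset.mem_biUnion] at hv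
        obtain ⟨k, hk, hvk⟩ := hv
        simp only [hD, Finset.mem_filter] at hvk
        simp only [Finset.mem_filter]
        exact ⟨hvk.1, k, hk, hvk.2.1⟩

lemma claim_upper (M : ℕ) {K : ℕ} (m : Fin K → ℕ) (w : Fin K → ℕ)
    (S T : Finset (Fin K)) (hTS : T ⊆ S)
    (hdown : ∀ j ∈ S, ∀ k ∈ T, w j < w k → j ∈ T) :
    ((Finset.range M).filter (fun v : ℕ => ∃ k ∈ T, (m k : ℤ) ∣ (v : ℤ))).card
      ≤ ∑ k ∈ T, ((Finset.range M).filter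
      (fun v : ℕ => (m k : ℤ) ∣ (v : ℤ) ∧ ∀ j ∈ S, w j < w k → ¬ (m j : ℤ) ∣ (v : ℤ))).card := by
  classical
  set D : Fin K → Finset ℕ := fun k => (Finset.range M).filter
      (fun v : ℕ => (m k : ℤ) ∣ (v : ℤ) ∧ ∀ j ∈ S, w j < w k → ¬ (m j : ℤ) ∣ (v : ℤ)) with hD
  calc ((Finset.range M).filter (fun v : ℕ => ∃ k ∈ T, (m k : ℤ) ∣ (v : ℤ))).card
      ≤ (T.biUnion D).card := by
        apply Finset.card_le_card
        intro v hv
        simp only [Finset.mem_filter] at hv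
        obtain ⟨hvM, k0, hk0, hdvd0⟩ := hv
        have hFne : (T.filter (fun k => (m k : ℤ) ∣ (v : ℤ))).Nonempty :=
          ⟨k0, Finset.mem_filter.mpr ⟨hk0, hdvd0⟩⟩
        obtain ⟨k, hkF, hkmin⟩ := Finset.exists_min_image _ w hFne
        simp only [Finset.mem_filter] at hkF
        simp only [Finset.mem_biUnion]
        refine ⟨k, hkF.1, ?_⟩
        simp only [hD, Finset.mem_filter]
        refine ⟨hvM, hkF.2, ?_⟩
        intro j hjS hlt hdvdj
        have hjT : j ∈ T := hdown j hjS k hkF.1 hlt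
        have := hkmin j (Finset.mem_filter.mpr ⟨hjT, hdvdj⟩)
        omega
    _ ≤ ∑ k ∈ T, (D k).card := Finset.card_biUnion_le

lemma card_Icc_filter_eq (L : ℕ) (hL : 0 < L) (P : ℕ → Prop) [DecidablePred P]
    (hper : ∀ a b : ℕ, a % L = b % L → (P a ↔ P b)) :
    ((Finset.Icc 1 L).filter P).card = ((Finset.range L).filter P).card := by
  classical
  apply Finset.card_nbij (fun n => n % L)
  · intro n hn
    simp only [Finset.mem_coe, Finset.mem_filter, Finset.mem_Icc, Finset.mem_range] at hn ⊢
    refine ⟨Nat.mod_lt _ hL, ?_⟩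
    exact (hper n (n % L) (by rw [Nat.mod_mod_of_dvd _ dvd_rfl])).mp hn.2
  · intro x hx y hy h
    simp only [Finset.mem_coe, Finset.mem_filter, Finset.mem_Icc] at hx hy
    obtain ⟨⟨hx1, hx2⟩, -⟩ := hx
    obtain ⟨⟨hy1, hy2⟩, -⟩ := hy
    have h : x % L = y % L := h
    rcases eq_or_lt_of_le hx2 with he | hlt
    · rcases eq_or_lt_of_le hy2 with he' | hlt'
      · omega
      · rw [he, Nat.mod_self, Nat.mod_eq_of_lt hlt'] at h; omega
    · rcases eq_or_lt_of_le hy2 with he' | hlt'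
      · rw [he', Nat.mod_self, Nat.mod_eq_of_lt hlt] at h; omega
      · rwa [Nat.mod_eq_of_lt hlt, Nat.mod_eq_of_lt hlt'] at h
  · intro v hv
    simp only [Finset.mem_coe, Finset.mem_filter, Finset.mem_range] at hv
    obtain ⟨hvL, hvP⟩ := hv
    by_cases hv0 : v = 0
    · refine ⟨L, ?_, ?_⟩
      · simp only [Finset.mem_coe, Finset.mem_filter, Finset.mem_Icc]
        refine ⟨⟨hL, le_refl L⟩, ?_⟩
        exact (hper v L (by rw [Nat.mod_self, hv0, Nat.zero_mod])).mp hvP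
      · simp [hv0, Nat.mod_self]
    · refine ⟨v, ?_, ?_⟩
      · simp only [Finset.mem_coe, Finset.mem_filter, Finset.mem_Icc]
        exact ⟨⟨by omega, le_of_lt hvL⟩, hvP⟩
      · simp [Nat.mod_eq_of_lt hvL]

lemma filter_card_congr {α : Type*} (s : Finset α) (P Q : α → Prop)
    [DecidablePred P] [DecidablePred Q] (h : ∀ x ∈ s, P x ↔ Q x) :
    (s.filter P).card = (s.filter Q).card := by
  rw [Finset.card_filter, Finset.card_filter]
  exact Finset.sum_congr rfl fun x hx => by simp [h x hx]

lemma lex_le' {K x y j k : ℕ} (hj : j < K) (hk : k < K) (h : x * K + j ≤ y * K + k) :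
    x ≤ y := by
  by_contra hxy
  push_neg at hxy
  have h2 : (y + 1) * K ≤ x * K := Nat.mul_le_mul_right K hxy
  rw [add_mul, one_mul] at h2
  omega

lemma swap_sum {K : ℕ} (pa : ℕ) (S : Finset (Fin K)) (c : Fin K → ℕ → Prop) (d : Fin K → ℕ)
    [∀ u, DecidablePred (fun k => c k u)] [∀ k, DecidablePred (c k)] :
    ∑ u ∈ Finset.range pa, ∑ k ∈ S.filter (fun k => c k u), d k
      = ∑ k ∈ S, ((Finset.range pa).filter (fun u => c k u)).card * d k := by
  have h1 : ∀ u, ∑ k ∈ S.filter (fun k => c k u), d k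
      = ∑ k ∈ S, if c k u then d k else 0 := fun u => Finset.sum_filter _ _
  simp_rw [h1]
  rw [Finset.sum_comm]
  refine Finset.sum_congr rfl fun k _ => ?_
  rw [← Finset.sum_filter, Finset.sum_const, smul_eq_mul]

open scoped Classical in
lemma rogers_key : ∀ L : ℕ, 0 < L → ∀ (K : ℕ) (b : Fin K → ℕ), (∀ k, 0 < b k) → (∀ k, b k ∣ L) →
    ∀ (r : Fin K → ℤ) (S : Finset (Fin K)),
    ((Finset.range L).filter (fun n : ℕ => ∃ k ∈ S, (b k : ℤ) ∣ (n : ℤ))).card ≤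
    ((Finset.range L).filter (fun n : ℕ => ∃ k ∈ S, (b k : ℤ) ∣ (n : ℤ) - r k)).card := by
  intro L
  induction L using Nat.strong_induction_on with
  | _ L IH =>
  intro hL K b hb hbL r S
  by_cases hL1 : L = 1
  · subst hL1
    have hb1 : ∀ k, b k = 1 := fun k => Nat.dvd_one.mp (hbL k)
    simp [hb1]
  have hL2 : 1 < L := by omega
  set p := L.minFac with hp_def
  have hp : p.Prime := Nat.minFac_prime hL1
  set a := L.factorization p with ha_def
  set pa := p ^ a with hpa_def
  have hpaL : pa ∣ L := Nat.ordProj_dvd L p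
  set M := L / pa with hM_def
  have hLe : pa * M = L := Nat.mul_div_cancel' hpaL
  have hcop : Nat.Coprime pa M := Nat.Coprime.pow_left a (Nat.coprime_ordCompl hp (by omega))
  have ha1 : 0 < a := hp.factorization_pos_of_dvd (by omega) (Nat.minFac_dvd L)
  have hpa1 : 1 < pa := Nat.one_lt_pow (by omega) hp.one_lt
  have hpa0 : 0 < pa := by omega
  have hM0 : 0 < M := Nat.pos_of_ne_zero (fun h => by rw [h, Nat.mul_zero] at hLe; omega)
  have hMlt : M < L := Nat.div_lt_self (by omega) hpa1
  set ak : Fin K → ℕ := fun k => (b k).factorization p with hak_def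
  set m : Fin K → ℕ := fun k => b k / p ^ ak k with hm_def
  have hbk : ∀ k, p ^ ak k * m k = b k := fun k => Nat.ordProj_mul_ordCompl_eq_self (b k) p
  have hm0 : ∀ k, 0 < m k := fun k => Nat.ordCompl_pos p (hb k).ne'
  have hmM : ∀ k, m k ∣ M := fun k => Nat.ordCompl_dvd_ordCompl_of_dvd (hbL k) p
  have hpak : ∀ k, p ^ ak k ∣ pa := fun k => Nat.ordProj_dvd_ordProj_of_dvd (by omega) (hbL k) p
  have hcopk : ∀ k, Nat.Coprime (p ^ ak k) (m k) :=
    fun k => Nat.Coprime.pow_left _ (Nat.coprime_ordCompl hp (hb k).ne')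
  have hsplit : ∀ (k : Fin K) (x : ℤ),
      ((b k : ℤ) ∣ x) ↔ (((p ^ ak k : ℕ) : ℤ) ∣ x ∧ ((m k : ℕ) : ℤ) ∣ x) := by
    intro k x
    rw [← hbk k]
    exact coprime_cast_mul_dvd_iff (hcopk k) x
  -- counting identity for the shifted side
  have hcount1 : ((Finset.range L).filter (fun n : ℕ => ∃ k ∈ S, (b k : ℤ) ∣ (n : ℤ) - r k)).card
      = ∑ u ∈ Finset.range pa,
          ((Finset.range M).filter (fun v : ℕ =>
            ∃ k ∈ S.filter (fun k => ((p ^ ak k : ℕ) : ℤ) ∣ (u : ℤ) - r k),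
              (m k : ℤ) ∣ (v : ℤ) - r k)).card := by
    have hA := crt_card pa M hpa0 hM0 hcop
      (fun n : ℕ => ∃ k ∈ S, (b k : ℤ) ∣ (n : ℤ) - r k)
      (fun u v => ∃ k ∈ S, (((p ^ ak k : ℕ) : ℤ) ∣ (u : ℤ) - r k) ∧ ((m k : ℤ) ∣ (v : ℤ) - r k))
      ?_
    · rw [hLe] at hA
      refine hA.trans ?_
      refine Finset.sum_congr rfl fun u _ => ?_
      apply filter_card_congr
      intro v _
      constructor
      · rintro ⟨k, hk, h1, h2⟩; exact ⟨k, Finset.mem_filter.mpr ⟨hk, h1⟩, h2⟩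
      · rintro ⟨k, hk, h2⟩
        obtain ⟨hk1, hk2⟩ := Finset.mem_filter.mp hk
        exact ⟨k, hk1, hk2, h2⟩
    · intro n _
      constructor
      · rintro ⟨k, hk, hdvd⟩
        rw [hsplit k] at hdvd
        exact ⟨k, hk, (dvd_mod_shift (hpak k) n (r k)).mp hdvd.1,
          (dvd_mod_shift (hmM k) n (r k)).mp hdvd.2⟩
      · rintro ⟨k, hk, h1, h2⟩
        exact ⟨k, hk, (hsplit k _).mpr ⟨(dvd_mod_shift (hpak k) n (r k)).mpr h1,
          (dvd_mod_shift (hmM k) n (r k)).mpr h2⟩⟩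
  -- counting identity for the unshifted side
  have hcount0 : ((Finset.range L).filter (fun n : ℕ => ∃ k ∈ S, (b k : ℤ) ∣ (n : ℤ))).card
      = ∑ u ∈ Finset.range pa,
          ((Finset.range M).filter (fun v : ℕ =>
            ∃ k ∈ S.filter (fun k => ((p ^ ak k : ℕ) : ℤ) ∣ (u : ℤ)),
              (m k : ℤ) ∣ (v : ℤ))).card := by
    have hA := crt_card pa M hpa0 hM0 hcop
      (fun n : ℕ => ∃ k ∈ S, (b k : ℤ) ∣ (n : ℤ))
      (fun u v => ∃ k ∈ S, (((p ^ ak k : ℕ) : ℤ) ∣ (u : ℤ)) ∧ ((m k : ℤ) ∣ (v : ℤ)))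
      ?_
    · rw [hLe] at hA
      refine hA.trans ?_
      refine Finset.sum_congr rfl fun u _ => ?_
      apply filter_card_congr
      intro v _
      constructor
      · rintro ⟨k, hk, h1, h2⟩; exact ⟨k, Finset.mem_filter.mpr ⟨hk, h1⟩, h2⟩
      · rintro ⟨k, hk, h2⟩
        obtain ⟨hk1, hk2⟩ := Finset.mem_filter.mp hk
        exact ⟨k, hk1, hk2, h2⟩
    · intro n _
      constructor
      · rintro ⟨k, hk, hdvd⟩
        rw [hsplit k] at hdvd
        exact ⟨k, hk, (dvd_mod_self' (hpak k) n).mp hdvd.1,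
          (dvd_mod_self' (hmM k) n).mp hdvd.2⟩
      · rintro ⟨k, hk, h1, h2⟩
        exact ⟨k, hk, (hsplit k _).mpr ⟨(dvd_mod_self' (hpak k) n).mpr h1,
          (dvd_mod_self' (hmM k) n).mpr h2⟩⟩
  -- the weight ordering
  set w : Fin K → ℕ := fun k => ak k * K + k.val with hw_def
  have hwinj : Function.Injective w := by
    intro x y h
    simp only [hw_def] at h
    have h1 : ak x ≤ ak y := lex_le' x.isLt y.isLt (le_of_eq h)
    have h2 : ak y ≤ ak x := lex_le' y.isLt x.isLt (le_of_eq h.symm)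
    have h3 : ak x = ak y := le_antisymm h1 h2
    rw [h3] at h
    have : x.val = y.val := by omega
    exact Fin.ext this
  have hwak : ∀ j k : Fin K, w j < w k → ak j ≤ ak k :=
    fun j k h => lex_le' j.isLt k.isLt (le_of_lt h)
  -- the main chain
  rw [hcount0, hcount1]
  calc ∑ u ∈ Finset.range pa,
        ((Finset.range M).filter (fun v : ℕ =>
          ∃ k ∈ S.filter (fun k => ((p ^ ak k : ℕ) : ℤ) ∣ (u : ℤ)), (m k : ℤ) ∣ (v : ℤ))).card
      ≤ ∑ u ∈ Finset.range pa, ∑ k ∈ S.filter (fun k => ((p ^ ak k : ℕ) : ℤ) ∣ (u : ℤ)),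
          ((Finset.range M).filter (fun v : ℕ => (m k : ℤ) ∣ (v : ℤ) ∧
            ∀ j ∈ S, w j < w k → ¬ (m j : ℤ) ∣ (v : ℤ))).card := by
        refine Finset.sum_le_sum fun u _ => ?_
        have hcu := claim_upper M m w S (S.filter (fun k => ((p ^ ak k : ℕ) : ℤ) ∣ (u : ℤ)))
          (Finset.filter_subset _ _) ?_
        · exact hcu
        · intro j hjS k hkT hlt
          obtain ⟨hkS, hkdvd⟩ := Finset.mem_filter.mp hkT
          refine Finset.mem_filter.mpr ⟨hjS, ?_⟩
          have hd : (p : ℕ) ^ ak j ∣ (p : ℕ) ^ ak k := pow_dvd_pow p (hwak j k hlt)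
          exact dvd_trans (Int.natCast_dvd_natCast.mpr hd) hkdvd
    _ = ∑ u ∈ Finset.range pa, ∑ k ∈ S.filter (fun k => ((p ^ ak k : ℕ) : ℤ) ∣ (u : ℤ) - r k),
          ((Finset.range M).filter (fun v : ℕ => (m k : ℤ) ∣ (v : ℤ) ∧
            ∀ j ∈ S, w j < w k → ¬ (m j : ℤ) ∣ (v : ℤ))).card := by
        have s0 := swap_sum pa S (fun k u => ((p ^ ak k : ℕ) : ℤ) ∣ (u : ℤ))
          (fun k => ((Finset.range M).filter (fun v : ℕ => (m k : ℤ) ∣ (v : ℤ) ∧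
            ∀ j ∈ S, w j < w k → ¬ (m j : ℤ) ∣ (v : ℤ))).card)
        have s1 := swap_sum pa S (fun k u => ((p ^ ak k : ℕ) : ℤ) ∣ (u : ℤ) - r k)
          (fun k => ((Finset.range M).filter (fun v : ℕ => (m k : ℤ) ∣ (v : ℤ) ∧
            ∀ j ∈ S, w j < w k → ¬ (m j : ℤ) ∣ (v : ℤ))).card)
        refine s0.trans (Eq.trans ?_ s1.symm)
        refine Finset.sum_congr rfl fun k _ => ?_
        congr 1
        have e1 := count_res pa (p ^ ak k) (Nat.pow_pos hp.pos) (hpak k) (r k)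
        have e0' := count_res pa (p ^ ak k) (Nat.pow_pos hp.pos) (hpak k) 0
        have e0 : ((Finset.range pa).filter
            (fun u : ℕ => ((p ^ ak k : ℕ) : ℤ) ∣ (u : ℤ))).card = pa / p ^ ak k := by
          refine Eq.trans ?_ e0'
          apply filter_card_congr
          intro x _
          simp
        rw [e0, e1]
    _ ≤ ∑ u ∈ Finset.range pa,
          ((Finset.range M).filter (fun v : ℕ =>
            ∃ k ∈ S.filter (fun k => ((p ^ ak k : ℕ) : ℤ) ∣ (u : ℤ) - r k),
              (m k : ℤ) ∣ (v : ℤ))).card := by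
        refine Finset.sum_le_sum fun u _ => ?_
        have hcl := claim_lower M m w hwinj S
          (S.filter (fun k => ((p ^ ak k : ℕ) : ℤ) ∣ (u : ℤ) - r k)) (Finset.filter_subset _ _)
        exact hcl
    _ ≤ ∑ u ∈ Finset.range pa,
          ((Finset.range M).filter (fun v : ℕ =>
            ∃ k ∈ S.filter (fun k => ((p ^ ak k : ℕ) : ℤ) ∣ (u : ℤ) - r k),
              (m k : ℤ) ∣ (v : ℤ) - r k)).card := by
        refine Finset.sum_le_sum fun u _ => ?_
        exact IH M hMlt hM0 K m hm0 hmM r _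

open scoped Classical in
/-- Rogers' inequality: For any `b_1,...,b_K ∈ ℕ` and residues
`r_1,...,r_K`, the natural density of `⋃_{k≤K} (b_kℤ + r_k)` is at least the
density of `⋃_{k≤K} b_kℤ`.  Both sets are periodic modulo `L = lcm(b_1,...,b_K)`,
so their densities are the proportions of covered residues in `[1, L]`. -/
theorem stmt_13 (K : ℕ) (b : Fin K → ℕ) (hb : ∀ k, 0 < b k) (r : Fin K → ℤ) :
    ((((Finset.Icc 1 (Finset.univ.lcm b)).filter
        (fun n => ∃ k, (b k : ℤ) ∣ ((n : ℤ) - r k))).card : ℚ) /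
          ((Finset.univ.lcm b : ℕ) : ℚ)) ≥
    ((((Finset.Icc 1 (Finset.univ.lcm b)).filter
        (fun n => ∃ k, b k ∣ n)).card : ℚ) / ((Finset.univ.lcm b : ℕ) : ℚ)) := by
  set L := Finset.univ.lcm b with hLdef
  have hL0 : L ≠ 0 := by
    intro h
    rw [hLdef, Finset.lcm_eq_zero_iff] at h
    obtain ⟨k, -, hk⟩ := h
    exact (hb k).ne' hk
  have hL : 0 < L := Nat.pos_of_ne_zero hL0
  have hdvd : ∀ k, b k ∣ L := fun k => Finset.dvd_lcm (Finset.mem_univ k)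
  have hLdvd : ∀ x y : ℕ, x % L = y % L → ∀ k, (b k : ℤ) ∣ (x : ℤ) - (y : ℤ) := by
    intro x y h k
    have h1 : (x : ℤ) % (L : ℤ) = (y : ℤ) % (L : ℤ) := by
      rw [← Int.natCast_mod, ← Int.natCast_mod, h]
    have h2 : (L : ℤ) ∣ (x : ℤ) - (y : ℤ) := by
      have h3 := Int.ModEq.dvd (show (x : ℤ) ≡ (y : ℤ) [ZMOD (L : ℤ)] from h1)
      exact (dvd_sub_comm).mp h3
    exact dvd_trans (Int.natCast_dvd_natCast.mpr (hdvd k)) h2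
  -- identify the coerced finset on the shifted side
  have hshift : ((Finset.Icc 1 L : Finset ℕ) : Finset ℤ).filter
        (fun n : ℤ => ∃ k, (b k : ℤ) ∣ (n - r k)) =
      Finset.image (Nat.cast : ℕ → ℤ)
        ((Finset.Icc 1 L).filter (fun n : ℕ => ∃ k, (b k : ℤ) ∣ ((n : ℤ) - r k))) := by
    have hbind : ((Finset.Icc 1 L : Finset ℕ) : Finset ℤ)
        = (Finset.Icc 1 L).image (Nat.cast : ℕ → ℤ) := by
      show (do let a ← Finset.Icc 1 L; pure ((a : ℕ) : ℤ)) = _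
      simp only [Bind.bind]
      ext x
      simp [Finset.mem_image]
    rw [hbind, Finset.filter_image]
  -- the card inequality
  have hcard : ((Finset.Icc 1 L).filter (fun n => ∃ k, b k ∣ n)).card ≤
      ((Finset.Icc 1 L).filter (fun n : ℕ => ∃ k, (b k : ℤ) ∣ ((n : ℤ) - r k))).card := by
    have h1 : ((Finset.Icc 1 L).filter (fun n => ∃ k, b k ∣ n)).card
        = ((Finset.range L).filter
            (fun n : ℕ => ∃ k ∈ (Finset.univ : Finset (Fin K)), (b k : ℤ) ∣ (n : ℤ))).card := by
      rw [card_Icc_filter_eq L hL _ ?_]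
      · apply filter_card_congr
        intro n _
        constructor
        · rintro ⟨k, hk⟩
          exact ⟨k, Finset.mem_univ k, Int.natCast_dvd_natCast.mpr hk⟩
        · rintro ⟨k, -, hk⟩
          exact ⟨k, Int.natCast_dvd_natCast.mp hk⟩
      · intro x y hxy
        constructor
        · rintro ⟨k, hk⟩
          refine ⟨k, Int.natCast_dvd_natCast.mp ?_⟩
          have h3 := hLdvd x y hxy k
          have h4 : (b k : ℤ) ∣ (x : ℤ) := Int.natCast_dvd_natCast.mpr hk
          have h5 : (b k : ℤ) ∣ (x : ℤ) - ((x : ℤ) - (y : ℤ)) := dvd_sub h4 h3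
          simpa using h5
        · rintro ⟨k, hk⟩
          refine ⟨k, Int.natCast_dvd_natCast.mp ?_⟩
          have h3 := hLdvd x y hxy k
          have h4 : (b k : ℤ) ∣ (y : ℤ) := Int.natCast_dvd_natCast.mpr hk
          have h5 : (b k : ℤ) ∣ (y : ℤ) + ((x : ℤ) - (y : ℤ)) := dvd_add h4 h3
          simpa using h5
    have h2 : ((Finset.Icc 1 L).filter (fun n : ℕ => ∃ k, (b k : ℤ) ∣ ((n : ℤ) - r k))).card
        = ((Finset.range L).filter
            (fun n : ℕ => ∃ k ∈ (Finset.univ : Finset (Fin K)), (b k : ℤ) ∣ (n : ℤ) - r k)).card := by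
      rw [card_Icc_filter_eq L hL _ ?_]
      · apply filter_card_congr
        intro n _
        constructor
        · rintro ⟨k, hk⟩
          exact ⟨k, Finset.mem_univ k, hk⟩
        · rintro ⟨k, -, hk⟩
          exact ⟨k, hk⟩
      · intro x y hxy
        constructor
        · rintro ⟨k, hk⟩
          exact ⟨k, (dvd_shift (hLdvd x y hxy k)).mp hk⟩
        · rintro ⟨k, hk⟩
          exact ⟨k, (dvd_shift (hLdvd x y hxy k)).mpr hk⟩
    rw [h1, h2]
    exact rogers_key L hL K b hb hdvd r Finset.univ
  rw [ge_iff_le]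
  have hcast : (((Finset.Icc 1 L : Finset ℕ) : Finset ℤ).filter
        (fun n : ℤ => ∃ k, (b k : ℤ) ∣ (n - r k))).card
      = ((Finset.Icc 1 L).filter (fun n : ℕ => ∃ k, (b k : ℤ) ∣ ((n : ℤ) - r k))).card := by
    rw [hshift]
    exact Finset.card_image_of_injective _ Nat.cast_injective
  rw [hcast]
  gcongr
end

section
/- Let β, r, n, c_1,...,c_m ∈ ℕ, and let p > n be a prime dividing c_1,...,c_k but not dividing c_{k+1},...,c_m nor β. Then d((βℤ + r) ∩ ⋂_{i=1}^n (F_{{c_1,...,c_m}} − i)) ≥ (1 − n/p)·d((βℤ + r) ∩ ⋂_{i=1}^n (F_{{c_{k+1},...,c_m}} − i)), where F_S = ℤ \ ⋃_{s∈S} sℤ. -/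
open Finset
open scoped Classical


open Finset
open scoped Classical

lemma per_nat (P : ℤ → Prop) (t : ℤ) (hP : ∀ z, P (z + t) ↔ P z) :
    ∀ (q : ℕ) (z : ℤ), P (z + q * t) ↔ P z := by
  intro q
  induction q with
  | zero => simp
  | succ q ih =>
    intro z
    have : z + ((q : ℤ) + 1) * t = (z + q * t) + t := by ring
    push_cast
    rw [this, hP, ih]

lemma per_int (P : ℤ → Prop) (t : ℤ) (hP : ∀ z, P (z + t) ↔ P z) :
    ∀ (q : ℤ) (z : ℤ), P (z + q * t) ↔ P z := by
  intro q z
  rcases le_or_gt 0 q with h | h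
  · lift q to ℕ using h
    exact per_nat P t hP q z
  · have h' : 0 ≤ -q := by omega
    lift -q to ℕ using h' with q' hq'
    have h2 := per_nat P t hP q' (z + q * t)
    have h3 : z + q * t + (q' : ℤ) * t = z := by rw [hq']; ring
    rw [h3] at h2
    exact h2.symm

lemma per_emod (P : ℤ → Prop) (t : ℤ) (hP : ∀ z, P (z + t) ↔ P z) (z : ℤ) :
    P z ↔ P (z % t) := by
  have : z = z % t + (z / t) * t := by
    rw [mul_comm]
    exact (Int.emod_add_mul_ediv z t).symm
  conv_lhs => rw [this]
  exact per_int P t hP (z / t) (z % t)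

lemma blocks (P : ℤ → Prop) [DecidablePred P] (t : ℤ) (ht : 0 < t)
    (hP : ∀ z, P (z + t) ↔ P z) (q : ℕ) :
    ((Ico 0 ((q : ℤ) * t)).filter P).card = q * ((Ico 0 t).filter P).card := by
  induction q with
  | zero => simp
  | succ q ih =>
    have h1 : (0 : ℤ) ≤ (q : ℤ) * t := by positivity
    have hsplit : Ico (0 : ℤ) (((q + 1 : ℕ) : ℤ) * t)
        = Ico 0 ((q : ℤ) * t) ∪ Ico ((q : ℤ) * t) (((q + 1 : ℕ) : ℤ) * t) := by
      rw [Finset.Ico_union_Ico_eq_Ico h1 (by push_cast; nlinarith)]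
    have hmap : Ico ((q : ℤ) * t) (((q + 1 : ℕ) : ℤ) * t)
        = (Ico (0 : ℤ) t).map (addLeftEmbedding ((q : ℤ) * t)) := by
      rw [Finset.map_add_left_Ico]
      congr 1
      · ring
      · push_cast; ring
    have hdisj : Disjoint (Ico (0 : ℤ) ((q : ℤ) * t)) (Ico ((q : ℤ) * t) (((q + 1 : ℕ) : ℤ) * t)) :=
      Finset.Ico_disjoint_Ico_consecutive _ _ _
    have hcong : ∀ z ∈ Ico (0 : ℤ) t,
        (P ∘ addLeftEmbedding ((q : ℤ) * t)) z ↔ P z := by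
      intro z _
      simp only [Function.comp_apply, addLeftEmbedding_apply]
      rw [add_comm]
      exact per_nat P t hP q z
    rw [hsplit, Finset.filter_union,
      Finset.card_union_of_disjoint (Finset.disjoint_filter_filter hdisj), ih, hmap,
      Finset.filter_map, Finset.card_map, Finset.filter_congr hcong]
    ring

lemma q_count (p n : ℕ) (Q : ℤ → Prop) [DecidablePred Q]
    (hQ : ∀ z, ¬ Q z → ∃ i : ℕ, i ∈ Finset.Icc 1 n ∧ (p : ℤ) ∣ z + i) :
    p - n ≤ ((Ico (0:ℤ) (p:ℤ)).filter Q).card := by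
  have hsplit := Finset.card_filter_add_card_filter_not
    (s := Ico (0:ℤ) (p:ℤ)) (p := Q)
  have hcard : (Ico (0:ℤ) (p:ℤ)).card = p := by
    rw [Int.card_Ico]; omega
  have hbad : ((Ico (0:ℤ) (p:ℤ)).filter (fun z => ¬ Q z)).card ≤ n := by
    have hn : ((Finset.Icc 1 n : Finset ℕ)).card = n := by simp
    rw [← hn]
    apply Finset.card_le_card_of_injOn
      (f := fun z => if h : ∃ i : ℕ, i ∈ Finset.Icc 1 n ∧ (p:ℤ) ∣ z + i then h.choose else 1)
    · intro z hz
      simp only [Finset.mem_coe, Finset.mem_filter] at hz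
      have h := hQ z hz.2
      simp only [Finset.mem_coe]
      rw [dif_pos h]
      exact h.choose_spec.1
    · intro z1 h1 z2 h2 heq
      simp only [Finset.coe_filter, Set.mem_setOf_eq, Finset.mem_Ico] at h1 h2
      have e1 := hQ z1 h1.2
      have e2 := hQ z2 h2.2
      simp only at heq
      rw [dif_pos e1, dif_pos e2] at heq
      obtain ⟨hi1, hd1⟩ := e1.choose_spec
      obtain ⟨hi2, hd2⟩ := e2.choose_spec
      rw [heq] at hd1
      have hdd : (p:ℤ) ∣ z1 - z2 := by
        have h' := dvd_sub hd1 hd2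
        simpa using h'
      have hz0 : z1 - z2 = 0 := by
        apply Int.eq_zero_of_abs_lt_dvd hdd
        rw [abs_lt]
        constructor <;> omega
      omega
  omega

lemma crt_count (P Q : ℤ → Prop) [DecidablePred P] [DecidablePred Q]
    (p M : ℕ) (hp : 0 < p) (hM : 0 < M) (hco : Nat.Coprime p M)
    (hPper : ∀ z, P (z + (M:ℤ)) ↔ P z) (hQper : ∀ z, Q (z + (p:ℤ)) ↔ Q z) :
    ((Ico (0:ℤ) (p:ℤ)).filter Q).card * ((Ico (0:ℤ) (M:ℤ)).filter P).card
      ≤ ((Ico (0:ℤ) ((p:ℤ) * (M:ℤ))).filter (fun z => P z ∧ Q z)).card := by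
  have hpM : (0:ℤ) < (p:ℤ) * M := by positivity
  have gmod : ∀ a b : ℤ, 0 ≤ a → a < p → 0 ≤ b → b < M →
      (((Nat.chineseRemainder hco a.toNat b.toNat : ℕ) : ℤ) % ((p:ℤ) * M)) % p = a ∧
      (((Nat.chineseRemainder hco a.toNat b.toNat : ℕ) : ℤ) % ((p:ℤ) * M)) % M = b := by
    intro a b ha hap hb hbM
    obtain ⟨hx1, hx2⟩ := (Nat.chineseRemainder hco a.toNat b.toNat).prop
    set x : ℕ := (Nat.chineseRemainder hco a.toNat b.toNat : ℕ) with hxdef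
    have hx1' : x % p = a.toNat % p := hx1
    have hx2' : x % M = b.toNat % M := hx2
    constructor
    · have h' : (((x:ℕ):ℤ) % ((p:ℤ) * M)) % p = ((x:ℕ):ℤ) % p :=
        Int.emod_emod_of_dvd _ ⟨(M:ℤ), rfl⟩
      rw [h', ← Int.natCast_mod, hx1', Nat.mod_eq_of_lt (by omega), Int.toNat_of_nonneg ha]
    · have h' : (((x:ℕ):ℤ) % ((p:ℤ) * M)) % M = ((x:ℕ):ℤ) % M :=
        Int.emod_emod_of_dvd _ ⟨(p:ℤ), mul_comm _ _⟩
      rw [h', ← Int.natCast_mod, hx2', Nat.mod_eq_of_lt (by omega), Int.toNat_of_nonneg hb]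
  rw [← Finset.card_product]
  apply Finset.card_le_card_of_injOn
    (f := fun ab : ℤ × ℤ =>
      ((Nat.chineseRemainder hco ab.1.toNat ab.2.toNat : ℕ) : ℤ) % ((p:ℤ) * M))
  · rintro ⟨a, b⟩ hab
    simp only [Finset.coe_product, Set.mem_prod, Finset.mem_coe, Finset.mem_product, Finset.mem_filter, Finset.mem_Ico] at hab
    obtain ⟨⟨⟨ha0, hap⟩, hQa⟩, ⟨hb0, hbM⟩, hPb⟩ := hab
    obtain ⟨g1, g2⟩ := gmod a b ha0 hap hb0 hbM
    simp only [Finset.mem_coe, Finset.mem_filter, Finset.mem_Ico]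
    refine ⟨⟨Int.emod_nonneg _ (by positivity), Int.emod_lt_of_pos _ hpM⟩, ?_, ?_⟩
    · exact (per_emod P (M:ℤ) hPper _).mpr (by rw [g2]; exact hPb)
    · exact (per_emod Q (p:ℤ) hQper _).mpr (by rw [g1]; exact hQa)
  · rintro ⟨a1, b1⟩ h1 ⟨a2, b2⟩ h2 heq
    simp only [Finset.coe_product, Set.mem_prod, Finset.mem_coe, Finset.mem_filter,
      Finset.mem_Ico] at h1 h2
    obtain ⟨⟨⟨ha10, ha1p⟩, _⟩, ⟨hb10, hb1M⟩, _⟩ := h1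
    obtain ⟨⟨⟨ha20, ha2p⟩, _⟩, ⟨hb20, hb2M⟩, _⟩ := h2
    obtain ⟨g11, g12⟩ := gmod a1 b1 ha10 ha1p hb10 hb1M
    obtain ⟨g21, g22⟩ := gmod a2 b2 ha20 ha2p hb20 hb2M
    simp only at heq
    have ea : a1 = a2 := by rw [← g11, ← g21, heq]
    have eb : b1 = b2 := by rw [← g12, ← g22, heq]
    simp [ea, eb]


open scoped Classical in
/-- `E ⊆ ℤ` has natural density `δ` (counting the positive part `[1, N]`). -/
def hasDensity (E : Set ℤ) (δ : ℝ) : Prop :=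
  Filter.Tendsto (fun N : ℕ =>
      (((Finset.Icc 1 N).filter (fun i => (i : ℤ) ∈ E)).card : ℝ) / (N : ℝ))
    Filter.atTop (nhds δ)

set_option maxHeartbeats 1000000 in
lemma hasDensity_periodic (P : ℤ → Prop) [DecidablePred P] (L : ℕ) (hL : 0 < L)
    (hP : ∀ z : ℤ, P (z + (L : ℤ)) ↔ P z) :
    hasDensity {z | P z} (((((Ico (0:ℤ) (L:ℤ)).filter P).card : ℕ) : ℝ) / L) := by
  unfold hasDensity
  have hLpos : (0:ℝ) < L := by exact_mod_cast hL
  have hset : ∀ N : ℕ, ((Finset.Icc 1 N : Finset ℕ) >>= fun a => (pure ((a:ℕ):ℤ) : Finset ℤ))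
      = Finset.Icc (1:ℤ) (N:ℤ) := by
    intro N
    ext z
    simp only [Finset.bind_def, Finset.mem_sup, Finset.pure_def, Finset.mem_singleton,
      Finset.mem_Icc]
    constructor
    · rintro ⟨a, ⟨h1, h2⟩, rfl⟩; omega
    · intro ⟨h1, h2⟩
      exact ⟨z.toNat, ⟨by omega, by omega⟩, by omega⟩
  refine Filter.Tendsto.congr
    (f₁ := fun N : ℕ => ((((Finset.Icc (1:ℤ) ((N:ℕ):ℤ)).filter P).card : ℕ) : ℝ) / N)
    (fun N => ?_) ?_
  · refine congrArg (fun x : ℕ => (x:ℝ)/(N:ℝ)) ?_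
    rw [hset N]
    exact congrArg Finset.card
      (@Finset.filter_congr ℤ P (fun i : ℤ => i ∈ {z | P z}) _
        (fun a => Classical.propDecidable _) _ (fun z _ => Iff.rfl))
  have h1 : ∀ N : ℕ, (N / L) * ((Ico (0:ℤ) (L:ℤ)).filter P).card ≤ ((Finset.Icc (1:ℤ) (N:ℤ)).filter P).card + 1 := by
    intro N
    have hql : ((N / L : ℕ) : ℤ) * L ≤ N := by exact_mod_cast Nat.div_mul_le_self N L
    have hsub : (Ico (0:ℤ) (((N / L : ℕ):ℤ) * L)).filter P
        ⊆ insert 0 ((Finset.Icc (1:ℤ) (N:ℤ)).filter P) := by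
      intro z hz
      simp only [Finset.mem_filter, Finset.mem_Ico] at hz
      rcases eq_or_ne z 0 with rfl | hne
      · exact Finset.mem_insert_self _ _
      · apply Finset.mem_insert_of_mem
        simp only [Finset.mem_filter, Finset.mem_Icc]
        exact ⟨⟨by omega, by omega⟩, hz.2⟩
    have hcard := Finset.card_le_card hsub
    rw [blocks P (L:ℤ) (by exact_mod_cast hL) hP (N / L)] at hcard
    have hins := Finset.card_insert_le (0:ℤ) ((Finset.Icc (1:ℤ) (N:ℤ)).filter P)
    omega
  have h2 : ∀ N : ℕ, ((Finset.Icc (1:ℤ) (N:ℤ)).filter P).card ≤ (N / L + 1) * ((Ico (0:ℤ) (L:ℤ)).filter P).card := by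
    intro N
    have hNlt : N < (N / L + 1) * L := by
      have e1 := Nat.div_add_mod N L
      have e2 := Nat.mod_lt N hL
      calc N = L * (N / L) + N % L := e1.symm
        _ < L * (N / L) + L := by omega
        _ = (N / L + 1) * L := by ring
    have hNlt' : (N:ℤ) < ((N / L + 1 : ℕ):ℤ) * (L:ℤ) := by exact_mod_cast hNlt
    have hsub : (Finset.Icc (1:ℤ) (N:ℤ)).filter P
        ⊆ (Ico (0:ℤ) (((N / L + 1 : ℕ):ℤ) * L)).filter P := by
      apply Finset.filter_subset_filter
      intro z hz
      simp only [Finset.mem_Icc] at hz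
      simp only [Finset.mem_Ico]
      omega
    have hcard := Finset.card_le_card hsub
    rwa [blocks P (L:ℤ) (by exact_mod_cast hL) hP (N / L + 1)] at hcard
  have hq : Filter.Tendsto (fun N : ℕ => ((N / L : ℕ) : ℝ) / N)
      Filter.atTop (nhds (1 / L)) := by
    have key : ∀ᶠ N : ℕ in Filter.atTop,
        1/(L:ℝ) - ((N % L : ℕ):ℝ)/((L:ℝ)*N) = ((N / L : ℕ):ℝ)/N := by
      filter_upwards [Filter.eventually_ge_atTop 1] with N hN
      have hN' : (0:ℝ) < N := by exact_mod_cast hN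
      have hrel : (L:ℝ) * ((N / L : ℕ):ℝ) + ((N % L : ℕ):ℝ) = N := by
        exact_mod_cast Nat.div_add_mod N L
      field_simp
      nlinarith [hrel]
    have h0 : Filter.Tendsto (fun N : ℕ => ((N % L : ℕ):ℝ)/((L:ℝ)*N))
        Filter.atTop (nhds 0) := by
      apply squeeze_zero (g := fun N : ℕ => (1:ℝ)/N) (fun N => by positivity) ?_
        tendsto_one_div_atTop_nhds_zero_nat
      intro N
      rcases Nat.eq_zero_or_pos N with rfl | hN
      · simp
      · have hNp : (0:ℝ) < N := by exact_mod_cast hN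
        rw [div_le_div_iff₀ (by positivity) hNp]
        have hmod : ((N % L : ℕ):ℝ) ≤ L := le_of_lt (by exact_mod_cast Nat.mod_lt N hL)
        nlinarith
    have := (tendsto_const_nhds (x := (1/(L:ℝ))) (f := Filter.atTop (α := ℕ))).sub h0
    rw [sub_zero] at this
    exact this.congr' key
  have hlow : Filter.Tendsto (fun N : ℕ => ((N / L : ℕ):ℝ)/N * ((Ico (0:ℤ) (L:ℤ)).filter P).card - 1/N)
      Filter.atTop (nhds ((((Ico (0:ℤ) (L:ℤ)).filter P).card : ℝ)/L)) := by
    have := (hq.mul_const (((Ico (0:ℤ) (L:ℤ)).filter P).card : ℝ)).sub tendsto_one_div_atTop_nhds_zero_nat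
    rw [show (1/(L:ℝ))*((Ico (0:ℤ) (L:ℤ)).filter P).card - 0 = (((Ico (0:ℤ) (L:ℤ)).filter P).card : ℝ)/L by ring] at this
    exact this
  have hup : Filter.Tendsto (fun N : ℕ => ((N / L : ℕ):ℝ)/N * ((Ico (0:ℤ) (L:ℤ)).filter P).card + (1/N)*((Ico (0:ℤ) (L:ℤ)).filter P).card)
      Filter.atTop (nhds ((((Ico (0:ℤ) (L:ℤ)).filter P).card : ℝ)/L)) := by
    have := (hq.mul_const (((Ico (0:ℤ) (L:ℤ)).filter P).card : ℝ)).add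
      (tendsto_one_div_atTop_nhds_zero_nat.mul_const (((Ico (0:ℤ) (L:ℤ)).filter P).card : ℝ))
    rw [show (1/(L:ℝ))*((Ico (0:ℤ) (L:ℤ)).filter P).card + 0*((Ico (0:ℤ) (L:ℤ)).filter P).card = (((Ico (0:ℤ) (L:ℤ)).filter P).card : ℝ)/L by ring] at this
    exact this
  apply tendsto_of_tendsto_of_tendsto_of_le_of_le' hlow hup
  · filter_upwards [Filter.eventually_ge_atTop 1] with N hN
    have hNp : (0:ℝ) < N := by exact_mod_cast hN
    have hb : ((N / L : ℕ):ℝ) * ((Ico (0:ℤ) (L:ℤ)).filter P).card - 1 ≤ (((Finset.Icc (1:ℤ) (N:ℤ)).filter P).card : ℝ) := by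
      have h1' : (((N / L) * ((Ico (0:ℤ) (L:ℤ)).filter P).card : ℕ):ℝ) ≤ ((((Finset.Icc (1:ℤ) (N:ℤ)).filter P).card : ℕ):ℝ) + 1 := by
        exact_mod_cast h1 N
      push_cast at h1' ⊢
      linarith
    rw [show ((N / L : ℕ):ℝ)/N * ((Ico (0:ℤ) (L:ℤ)).filter P).card - 1/N = (((N / L : ℕ):ℝ) * ((Ico (0:ℤ) (L:ℤ)).filter P).card - 1)/N by ring]
    gcongr
  · filter_upwards [Filter.eventually_ge_atTop 1] with N hN
    have hNp : (0:ℝ) < N := by exact_mod_cast hN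
    have hb : ((((Finset.Icc (1:ℤ) (N:ℤ)).filter P).card : ℕ):ℝ) ≤ (((N / L : ℕ):ℝ) + 1) * ((Ico (0:ℤ) (L:ℤ)).filter P).card := by
      have h2' : ((((Finset.Icc (1:ℤ) (N:ℤ)).filter P).card : ℕ):ℝ) ≤ (((N / L + 1) * ((Ico (0:ℤ) (L:ℤ)).filter P).card : ℕ):ℝ) := by
        exact_mod_cast h2 N
      push_cast at h2' ⊢
      linarith
    rw [show ((N / L : ℕ):ℝ)/N * ((Ico (0:ℤ) (L:ℤ)).filter P).card + (1/N)*((Ico (0:ℤ) (L:ℤ)).filter P).card = ((((N / L : ℕ):ℝ) + 1) * ((Ico (0:ℤ) (L:ℤ)).filter P).card)/N by ring]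
    gcongr

/-- Let `β, r, n, c_1, ..., c_m ∈ ℕ`, and let `p > n` be a prime
dividing `c_1, ..., c_k` but not `c_{k+1}, ..., c_m` nor `β`.  Then
`d((βℤ+r) ∩ ⋂_{i=1}^n (F_{{c_1,...,c_m}} − i))
  ≥ (1 − n/p)·d((βℤ+r) ∩ ⋂_{i=1}^n (F_{{c_{k+1},...,c_m}} − i))`,
where `F_S = ℤ \ ⋃_{s∈S} sℤ`. -/
theorem stmt_15 (β r n : ℕ) (hβ : 0 < β) (m k : ℕ) (hk : k ≤ m)
    (c : Fin m → ℕ) (hc : ∀ j, 0 < c j)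
    (p : ℕ) (hp : p.Prime) (hpn : n < p) (hpβ : ¬ p ∣ β)
    (hdvd : ∀ j : Fin m, ((j : ℕ) < k → p ∣ c j) ∧ (k ≤ (j : ℕ) → ¬ p ∣ c j)) :
    ∃ d₁ d₂ : ℝ,
      hasDensity {z : ℤ | (β : ℤ) ∣ (z - r) ∧
          ∀ i ∈ Finset.Icc 1 n, ∀ j : Fin m, ¬ (c j : ℤ) ∣ (z + (i : ℤ))} d₁ ∧
      hasDensity {z : ℤ | (β : ℤ) ∣ (z - r) ∧
          ∀ i ∈ Finset.Icc 1 n, ∀ j : Fin m, k ≤ (j : ℕ) →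
            ¬ (c j : ℤ) ∣ (z + (i : ℤ))} d₂ ∧
      d₁ ≥ (1 - (n : ℝ) / (p : ℝ)) * d₂ := by
  obtain ⟨M, hMdef⟩ : ∃ M : ℕ,
      M = β * ∏ j ∈ Finset.univ.filter (fun j : Fin m => k ≤ (j : ℕ)), c j := ⟨_, rfl⟩
  obtain ⟨K, hKdef⟩ : ∃ K : ℕ,
      K = ∏ j ∈ Finset.univ.filter (fun j : Fin m => (j : ℕ) < k), c j := ⟨_, rfl⟩
  obtain ⟨L, hLdef⟩ : ∃ L : ℕ, L = K * (p * M) := ⟨_, rfl⟩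
  have hM0 : 0 < M := by
    rw [hMdef]; exact Nat.mul_pos hβ (Finset.prod_pos fun j _ => hc j)
  have hK0 : 0 < K := by
    rw [hKdef]; exact Finset.prod_pos fun j _ => hc j
  have hL0 : 0 < L := by
    rw [hLdef]; exact Nat.mul_pos hK0 (Nat.mul_pos hp.pos hM0)
  have hβM : β ∣ M := by rw [hMdef]; exact dvd_mul_right _ _
  have hjM : ∀ j : Fin m, k ≤ (j : ℕ) → c j ∣ M := by
    intro j hj
    rw [hMdef]
    exact Dvd.dvd.mul_left (Finset.dvd_prod_of_mem c (by simp [hj])) β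
  have hjK : ∀ j : Fin m, (j : ℕ) < k → c j ∣ K := by
    intro j hj
    rw [hKdef]
    exact Finset.dvd_prod_of_mem c (by simp [hj])
  have hpML : p * M ∣ L := by rw [hLdef]; exact dvd_mul_left _ _
  have hML : M ∣ L := (dvd_mul_left M p).trans hpML
  have hβL : β ∣ L := hβM.trans hML
  have hKL : K ∣ L := by rw [hLdef]; exact dvd_mul_right _ _
  have hjL : ∀ j : Fin m, c j ∣ L := by
    intro j
    rcases lt_or_ge (j : ℕ) k with hj | hj
    · exact (hjK j hj).trans hKL
    · exact (hjM j hj).trans hML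
  have hpL : p ∣ L := (dvd_mul_right p M).trans hpML
  have hpM : ¬ p ∣ M := by
    rw [hMdef]
    intro hd
    rcases (Nat.Prime.dvd_mul hp).mp hd with h | h
    · exact hpβ h
    · obtain ⟨j, hjmem, hdj⟩ := (Prime.dvd_finset_prod_iff hp.prime c).mp h
      simp only [Finset.mem_filter, Finset.mem_univ, true_and] at hjmem
      exact (hdvd j).2 hjmem hdj
  have hco : Nat.Coprime p M := (Nat.Prime.coprime_iff_not_dvd hp).mpr hpM
  -- periodicity
  have perAL : ∀ z : ℤ, (fun z : ℤ => (β : ℤ) ∣ (z - (r : ℤ)) ∧ ∀ i ∈ Finset.Icc 1 n, ∀ j : Fin m, ¬ (c j : ℤ) ∣ (z + (i : ℤ))) (z + ((L:ℕ):ℤ)) ↔ (fun z : ℤ => (β : ℤ) ∣ (z - (r : ℤ)) ∧ ∀ i ∈ Finset.Icc 1 n, ∀ j : Fin m, ¬ (c j : ℤ) ∣ (z + (i : ℤ))) z := by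
    intro z
    refine and_congr ?_ ?_
    · rw [show z + ((L:ℕ):ℤ) - (r : ℤ) = ((L:ℕ):ℤ) + (z - (r : ℤ)) by ring]
      exact dvd_add_right (Int.natCast_dvd_natCast.mpr hβL)
    · refine forall_congr' fun i => imp_congr_right fun _ =>
        forall_congr' fun j => not_congr ?_
      rw [show z + ((L:ℕ):ℤ) + (i : ℤ) = ((L:ℕ):ℤ) + (z + (i : ℤ)) by ring]
      exact dvd_add_right (Int.natCast_dvd_natCast.mpr (hjL j))
  have perBgen : ∀ T : ℤ, (β : ℤ) ∣ T → (∀ j : Fin m, k ≤ (j : ℕ) → (c j : ℤ) ∣ T) →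
      ∀ z : ℤ, (fun z : ℤ => (β : ℤ) ∣ (z - (r : ℤ)) ∧ ∀ i ∈ Finset.Icc 1 n, ∀ j : Fin m, k ≤ (j : ℕ) → ¬ (c j : ℤ) ∣ (z + (i : ℤ))) (z + T) ↔ (fun z : ℤ => (β : ℤ) ∣ (z - (r : ℤ)) ∧ ∀ i ∈ Finset.Icc 1 n, ∀ j : Fin m, k ≤ (j : ℕ) → ¬ (c j : ℤ) ∣ (z + (i : ℤ))) z := by
    intro T h1 h2 z
    refine and_congr ?_ ?_
    · rw [show z + T - (r : ℤ) = T + (z - (r : ℤ)) by ring]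
      exact dvd_add_right h1
    · refine forall_congr' fun i => imp_congr_right fun _ =>
        forall_congr' fun j => imp_congr_right fun hj => not_congr ?_
      rw [show z + T + (i : ℤ) = T + (z + (i : ℤ)) by ring]
      exact dvd_add_right (h2 j hj)
  have perQgen : ∀ T : ℤ, (p : ℤ) ∣ T → ∀ z : ℤ, (fun z : ℤ => ∀ i ∈ Finset.Icc 1 n, ¬ (p : ℤ) ∣ (z + (i : ℤ))) (z + T) ↔ (fun z : ℤ => ∀ i ∈ Finset.Icc 1 n, ¬ (p : ℤ) ∣ (z + (i : ℤ))) z := by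
    intro T h1 z
    refine forall_congr' fun i => imp_congr_right fun _ => not_congr ?_
    rw [show z + T + (i : ℤ) = T + (z + (i : ℤ)) by ring]
    exact dvd_add_right h1
  have dβM : (β : ℤ) ∣ ((M:ℕ):ℤ) := Int.natCast_dvd_natCast.mpr hβM
  have djM : ∀ j : Fin m, k ≤ (j : ℕ) → (c j : ℤ) ∣ ((M:ℕ):ℤ) :=
    fun j hj => Int.natCast_dvd_natCast.mpr (hjM j hj)
  have dβpM : (β : ℤ) ∣ (p:ℤ) * (M:ℤ) := by
    exact_mod_cast Int.natCast_dvd_natCast.mpr (hβM.trans (dvd_mul_left M p))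
  have djpM : ∀ j : Fin m, k ≤ (j : ℕ) → (c j : ℤ) ∣ (p:ℤ) * (M:ℤ) := fun j hj => by
    exact_mod_cast Int.natCast_dvd_natCast.mpr ((hjM j hj).trans (dvd_mul_left M p))
  have dβL : (β : ℤ) ∣ ((L:ℕ):ℤ) := Int.natCast_dvd_natCast.mpr hβL
  have djL : ∀ j : Fin m, k ≤ (j : ℕ) → (c j : ℤ) ∣ ((L:ℕ):ℤ) :=
    fun j hj => Int.natCast_dvd_natCast.mpr ((hjM j hj).trans hML)
  have dpL : (p : ℤ) ∣ ((L:ℕ):ℤ) := Int.natCast_dvd_natCast.mpr hpL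
  have dppM : (p : ℤ) ∣ (p:ℤ) * (M:ℤ) := dvd_mul_right _ _
  have perBL := perBgen ((L:ℕ):ℤ) dβL djL
  have perBM := perBgen ((M:ℕ):ℤ) dβM djM
  have perBpM := perBgen ((p:ℤ) * (M:ℤ)) dβpM djpM
  have perQp := perQgen ((p:ℕ):ℤ) dvd_rfl
  have perBQpM : ∀ z : ℤ, (fun z : ℤ => ((β : ℤ) ∣ (z - (r : ℤ)) ∧ ∀ i ∈ Finset.Icc 1 n, ∀ j : Fin m, k ≤ (j : ℕ) → ¬ (c j : ℤ) ∣ (z + (i : ℤ))) ∧ ∀ i ∈ Finset.Icc 1 n, ¬ (p : ℤ) ∣ (z + (i : ℤ))) (z + ((p:ℤ) * (M:ℤ))) ↔ (fun z : ℤ => ((β : ℤ) ∣ (z - (r : ℤ)) ∧ ∀ i ∈ Finset.Icc 1 n, ∀ j : Fin m, k ≤ (j : ℕ) → ¬ (c j : ℤ) ∣ (z + (i : ℤ))) ∧ ∀ i ∈ Finset.Icc 1 n, ¬ (p : ℤ) ∣ (z + (i : ℤ))) z :=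
    fun z => and_congr (perBpM z) (perQgen ((p:ℤ) * (M:ℤ)) dppM z)
  have perBQL : ∀ z : ℤ, (fun z : ℤ => ((β : ℤ) ∣ (z - (r : ℤ)) ∧ ∀ i ∈ Finset.Icc 1 n, ∀ j : Fin m, k ≤ (j : ℕ) → ¬ (c j : ℤ) ∣ (z + (i : ℤ))) ∧ ∀ i ∈ Finset.Icc 1 n, ¬ (p : ℤ) ∣ (z + (i : ℤ))) (z + ((L:ℕ):ℤ)) ↔ (fun z : ℤ => ((β : ℤ) ∣ (z - (r : ℤ)) ∧ ∀ i ∈ Finset.Icc 1 n, ∀ j : Fin m, k ≤ (j : ℕ) → ¬ (c j : ℤ) ∣ (z + (i : ℤ))) ∧ ∀ i ∈ Finset.Icc 1 n, ¬ (p : ℤ) ∣ (z + (i : ℤ))) z :=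
    fun z => and_congr (perBL z) (perQgen ((L:ℕ):ℤ) dpL z)
  have hpM0 : (0:ℤ) < (p:ℤ) * (M:ℤ) := by
    have := Nat.mul_pos hp.pos hM0
    exact_mod_cast this
  have ecast : ((L:ℕ):ℤ) = ((K:ℕ):ℤ) * ((p:ℤ) * (M:ℤ)) := by
    rw [hLdef]; push_cast; ring
  -- counting chain
  have s1 : ((Finset.Ico (0:ℤ) ((L:ℕ):ℤ)).filter (fun z : ℤ => ((β : ℤ) ∣ (z - (r : ℤ)) ∧ ∀ i ∈ Finset.Icc 1 n, ∀ j : Fin m, k ≤ (j : ℕ) → ¬ (c j : ℤ) ∣ (z + (i : ℤ))) ∧ ∀ i ∈ Finset.Icc 1 n, ¬ (p : ℤ) ∣ (z + (i : ℤ)))).card ≤ ((Finset.Ico (0:ℤ) ((L:ℕ):ℤ)).filter (fun z : ℤ => (β : ℤ) ∣ (z - (r : ℤ)) ∧ ∀ i ∈ Finset.Icc 1 n, ∀ j : Fin m, ¬ (c j : ℤ) ∣ (z + (i : ℤ)))).card := by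
    apply Finset.card_le_card
    intro z hz
    simp only [Finset.mem_filter] at hz ⊢
    obtain ⟨hmem, ⟨hdiv, hB⟩, hQ⟩ := hz
    refine ⟨hmem, hdiv, fun i hi j => ?_⟩
    rcases lt_or_ge (j : ℕ) k with hjk | hjk
    · intro hcd
      exact hQ i hi ((Int.natCast_dvd_natCast.mpr ((hdvd j).1 hjk)).trans hcd)
    · exact hB i hi j hjk
  have s2 : ((Finset.Ico (0:ℤ) ((L:ℕ):ℤ)).filter (fun z : ℤ => ((β : ℤ) ∣ (z - (r : ℤ)) ∧ ∀ i ∈ Finset.Icc 1 n, ∀ j : Fin m, k ≤ (j : ℕ) → ¬ (c j : ℤ) ∣ (z + (i : ℤ))) ∧ ∀ i ∈ Finset.Icc 1 n, ¬ (p : ℤ) ∣ (z + (i : ℤ)))).card = K * ((Finset.Ico (0:ℤ) ((p:ℤ) * (M:ℤ))).filter (fun z : ℤ => ((β : ℤ) ∣ (z - (r : ℤ)) ∧ ∀ i ∈ Finset.Icc 1 n, ∀ j : Fin m, k ≤ (j : ℕ) → ¬ (c j : ℤ) ∣ (z + (i : ℤ))) ∧ ∀ i ∈ Finset.Icc 1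 n, ¬ (p : ℤ) ∣ (z + (i : ℤ)))).card := by
    rw [ecast]
    exact blocks (fun z : ℤ => ((β : ℤ) ∣ (z - (r : ℤ)) ∧ ∀ i ∈ Finset.Icc 1 n, ∀ j : Fin m, k ≤ (j : ℕ) → ¬ (c j : ℤ) ∣ (z + (i : ℤ))) ∧ ∀ i ∈ Finset.Icc 1 n, ¬ (p : ℤ) ∣ (z + (i : ℤ))) ((p:ℤ) * (M:ℤ)) hpM0 perBQpM K
  have s3 : ((Finset.Ico (0:ℤ) ((L:ℕ):ℤ)).filter (fun z : ℤ => (β : ℤ) ∣ (z - (r : ℤ)) ∧ ∀ i ∈ Finset.Icc 1 n, ∀ j : Fin m, k ≤ (j : ℕ) → ¬ (c j : ℤ) ∣ (z + (i : ℤ)))).card = K * ((Finset.Ico (0:ℤ) ((p:ℤ) * (M:ℤ))).filter (fun z : ℤ => (β : ℤ) ∣ (z - (r : ℤ)) ∧ ∀ i ∈ Finset.Icc 1 n, ∀ j : Fin m, k ≤ (j : ℕ) → ¬ (c j : ℤ) ∣ (z + (i : ℤ)))).card := by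
    rw [ecast]
    exact blocks (fun z : ℤ => (β : ℤ) ∣ (z - (r : ℤ)) ∧ ∀ i ∈ Finset.Icc 1 n, ∀ j : Fin m, k ≤ (j : ℕ) → ¬ (c j : ℤ) ∣ (z + (i : ℤ))) ((p:ℤ) * (M:ℤ)) hpM0 perBpM K
  have s4 : ((Finset.Ico (0:ℤ) ((p:ℤ) * (M:ℤ))).filter (fun z : ℤ => (β : ℤ) ∣ (z - (r : ℤ)) ∧ ∀ i ∈ Finset.Icc 1 n, ∀ j : Fin m, k ≤ (j : ℕ) → ¬ (c j : ℤ) ∣ (z + (i : ℤ)))).card = p * ((Finset.Ico (0:ℤ) ((M:ℕ):ℤ)).filter (fun z : ℤ => (β : ℤ) ∣ (z - (r : ℤ)) ∧ ∀ i ∈ Finset.Icc 1 n, ∀ j : Fin m, k ≤ (j : ℕ) → ¬ (c j : ℤ) ∣ (z + (i : ℤ)))).card := blocks (fun z : ℤ => (β : ℤ) ∣ (z - (r : ℤ)) ∧ ∀ i ∈ Finset.Icc 1 n, ∀ j : Fin m, k ≤ (j : ℕ) → ¬ (c j : ℤ) ∣ (z + (i : ℤ))) ((M:ℕ):ℤ)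 (by exact_mod_cast hM0) perBM p
  have s5 : ((Finset.Ico (0:ℤ) ((p:ℕ):ℤ)).filter (fun z : ℤ => ∀ i ∈ Finset.Icc 1 n, ¬ (p : ℤ) ∣ (z + (i : ℤ)))).card * ((Finset.Ico (0:ℤ) ((M:ℕ):ℤ)).filter (fun z : ℤ => (β : ℤ) ∣ (z - (r : ℤ)) ∧ ∀ i ∈ Finset.Icc 1 n, ∀ j : Fin m, k ≤ (j : ℕ) → ¬ (c j : ℤ) ∣ (z + (i : ℤ)))).card ≤ ((Finset.Ico (0:ℤ) ((p:ℤ) * (M:ℤ))).filter (fun z : ℤ => ((β : ℤ) ∣ (z - (r : ℤ)) ∧ ∀ i ∈ Finset.Icc 1 n, ∀ j : Fin m, k ≤ (j : ℕ) → ¬ (c j : ℤ) ∣ (z + (i : ℤ))) ∧ ∀ i ∈ Finset.Icc 1 n, ¬ (p : ℤ) ∣ (z + (i : ℤ)))).card :=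
    crt_count (fun z : ℤ => (β : ℤ) ∣ (z - (r : ℤ)) ∧ ∀ i ∈ Finset.Icc 1 n, ∀ j : Fin m, k ≤ (j : ℕ) → ¬ (c j : ℤ) ∣ (z + (i : ℤ))) (fun z : ℤ => ∀ i ∈ Finset.Icc 1 n, ¬ (p : ℤ) ∣ (z + (i : ℤ))) p M hp.pos hM0 hco perBM perQp
  have s6 : p - n ≤ ((Finset.Ico (0:ℤ) ((p:ℕ):ℤ)).filter (fun z : ℤ => ∀ i ∈ Finset.Icc 1 n, ¬ (p : ℤ) ∣ (z + (i : ℤ)))).card := by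
    apply q_count
    intro z hz
    push_neg at hz
    exact hz
  have hnat : (p - n) * ((Finset.Ico (0:ℤ) ((L:ℕ):ℤ)).filter (fun z : ℤ => (β : ℤ) ∣ (z - (r : ℤ)) ∧ ∀ i ∈ Finset.Icc 1 n, ∀ j : Fin m, k ≤ (j : ℕ) → ¬ (c j : ℤ) ∣ (z + (i : ℤ)))).card ≤ p * ((Finset.Ico (0:ℤ) ((L:ℕ):ℤ)).filter (fun z : ℤ => (β : ℤ) ∣ (z - (r : ℤ)) ∧ ∀ i ∈ Finset.Icc 1 n, ∀ j : Fin m, ¬ (c j : ℤ) ∣ (z + (i : ℤ)))).card := by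
    calc (p - n) * ((Finset.Ico (0:ℤ) ((L:ℕ):ℤ)).filter (fun z : ℤ => (β : ℤ) ∣ (z - (r : ℤ)) ∧ ∀ i ∈ Finset.Icc 1 n, ∀ j : Fin m, k ≤ (j : ℕ) → ¬ (c j : ℤ) ∣ (z + (i : ℤ)))).card
        = (p - n) * (K * (p * ((Finset.Ico (0:ℤ) ((M:ℕ):ℤ)).filter (fun z : ℤ => (β : ℤ) ∣ (z - (r : ℤ)) ∧ ∀ i ∈ Finset.Icc 1 n, ∀ j : Fin m, k ≤ (j : ℕ) → ¬ (c j : ℤ) ∣ (z + (i : ℤ)))).card)) := by rw [s3, s4]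
      _ = p * (K * ((p - n) * ((Finset.Ico (0:ℤ) ((M:ℕ):ℤ)).filter (fun z : ℤ => (β : ℤ) ∣ (z - (r : ℤ)) ∧ ∀ i ∈ Finset.Icc 1 n, ∀ j : Fin m, k ≤ (j : ℕ) → ¬ (c j : ℤ) ∣ (z + (i : ℤ)))).card)) := by ring
      _ ≤ p * (K * (((Finset.Ico (0:ℤ) ((p:ℕ):ℤ)).filter (fun z : ℤ => ∀ i ∈ Finset.Icc 1 n, ¬ (p : ℤ) ∣ (z + (i : ℤ)))).card * ((Finset.Ico (0:ℤ) ((M:ℕ):ℤ)).filter (fun z : ℤ => (β : ℤ) ∣ (z - (r : ℤ)) ∧ ∀ i ∈ Finset.Icc 1 n, ∀ j : Fin m, k ≤ (j : ℕ) → ¬ (c j : ℤ) ∣ (z + (i : ℤ)))).card)) :=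
          mul_le_mul_right (mul_le_mul_right (mul_le_mul_left s6 _) _) _
      _ ≤ p * (K * ((Finset.Ico (0:ℤ) ((p:ℤ) * (M:ℤ))).filter (fun z : ℤ => ((β : ℤ) ∣ (z - (r : ℤ)) ∧ ∀ i ∈ Finset.Icc 1 n, ∀ j : Fin m, k ≤ (j : ℕ) → ¬ (c j : ℤ) ∣ (z + (i : ℤ))) ∧ ∀ i ∈ Finset.Icc 1 n, ¬ (p : ℤ) ∣ (z + (i : ℤ)))).card) := mul_le_mul_right (mul_le_mul_right s5 _) _
      _ = p * ((Finset.Ico (0:ℤ) ((L:ℕ):ℤ)).filter (fun z : ℤ => ((β : ℤ) ∣ (z - (r : ℤ)) ∧ ∀ i ∈ Finset.Icc 1 n, ∀ j : Fin m, k ≤ (j : ℕ) → ¬ (c j : ℤ) ∣ (z + (i : ℤ))) ∧ ∀ i ∈ Finset.Icc 1 n, ¬ (p : ℤ) ∣ (z + (i : ℤ)))).card := by rw [s2]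
      _ ≤ p * ((Finset.Ico (0:ℤ) ((L:ℕ):ℤ)).filter (fun z : ℤ => (β : ℤ) ∣ (z - (r : ℤ)) ∧ ∀ i ∈ Finset.Icc 1 n, ∀ j : Fin m, ¬ (c j : ℤ) ∣ (z + (i : ℤ)))).card := mul_le_mul_right s1 _
  refine ⟨((((Finset.Ico (0:ℤ) ((L:ℕ):ℤ)).filter (fun z : ℤ => (β : ℤ) ∣ (z - (r : ℤ)) ∧ ∀ i ∈ Finset.Icc 1 n, ∀ j : Fin m, ¬ (c j : ℤ) ∣ (z + (i : ℤ)))).card : ℕ) : ℝ) / L, ((((Finset.Ico (0:ℤ) ((L:ℕ):ℤ)).filter (fun z : ℤ => (β : ℤ) ∣ (z - (r : ℤ)) ∧ ∀ i ∈ Finset.Icc 1 n, ∀ j : Fin m, k ≤ (j : ℕ) → ¬ (c j : ℤ) ∣ (z + (i : ℤ)))).card : ℕ) : ℝ) / L,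
    hasDensity_periodic (fun z : ℤ => (β : ℤ) ∣ (z - (r : ℤ)) ∧ ∀ i ∈ Finset.Icc 1 n, ∀ j : Fin m, ¬ (c j : ℤ) ∣ (z + (i : ℤ))) L hL0 perAL,
    hasDensity_periodic (fun z : ℤ => (β : ℤ) ∣ (z - (r : ℤ)) ∧ ∀ i ∈ Finset.Icc 1 n, ∀ j : Fin m, k ≤ (j : ℕ) → ¬ (c j : ℤ) ∣ (z + (i : ℤ))) L hL0 perBL, ?_⟩
  have hp0 : (0:ℝ) < p := by exact_mod_cast hp.pos
  have hL0' : (0:ℝ) < L := by exact_mod_cast hL0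
  have hr : ((p:ℝ) - n) * ((Finset.Ico (0:ℤ) ((L:ℕ):ℤ)).filter (fun z : ℤ => (β : ℤ) ∣ (z - (r : ℤ)) ∧ ∀ i ∈ Finset.Icc 1 n, ∀ j : Fin m, k ≤ (j : ℕ) → ¬ (c j : ℤ) ∣ (z + (i : ℤ)))).card ≤ (p:ℝ) * ((Finset.Ico (0:ℤ) ((L:ℕ):ℤ)).filter (fun z : ℤ => (β : ℤ) ∣ (z - (r : ℤ)) ∧ ∀ i ∈ Finset.Icc 1 n, ∀ j : Fin m, ¬ (c j : ℤ) ∣ (z + (i : ℤ)))).card := by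
    have h' : (((p - n) * ((Finset.Ico (0:ℤ) ((L:ℕ):ℤ)).filter (fun z : ℤ => (β : ℤ) ∣ (z - (r : ℤ)) ∧ ∀ i ∈ Finset.Icc 1 n, ∀ j : Fin m, k ≤ (j : ℕ) → ¬ (c j : ℤ) ∣ (z + (i : ℤ)))).card : ℕ) : ℝ) ≤ ((p * ((Finset.Ico (0:ℤ) ((L:ℕ):ℤ)).filter (fun z : ℤ => (β : ℤ) ∣ (z - (r : ℤ)) ∧ ∀ i ∈ Finset.Icc 1 n, ∀ j : Fin m, ¬ (c j : ℤ) ∣ (z + (i : ℤ)))).card : ℕ) : ℝ) := by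
      exact_mod_cast hnat
    push_cast [Nat.cast_sub hpn.le] at h'
    linarith
  rw [ge_iff_le]
  have e1 : (1 - (n:ℝ)/p) * (((((Finset.Ico (0:ℤ) ((L:ℕ):ℤ)).filter (fun z : ℤ => (β : ℤ) ∣ (z - (r : ℤ)) ∧ ∀ i ∈ Finset.Icc 1 n, ∀ j : Fin m, k ≤ (j : ℕ) → ¬ (c j : ℤ) ∣ (z + (i : ℤ)))).card : ℕ) : ℝ)/L)
      = ((p:ℝ) - n) * ((Finset.Ico (0:ℤ) ((L:ℕ):ℤ)).filter (fun z : ℤ => (β : ℤ) ∣ (z - (r : ℤ)) ∧ ∀ i ∈ Finset.Icc 1 n, ∀ j : Fin m, k ≤ (j : ℕ) → ¬ (c j : ℤ) ∣ (z + (i : ℤ)))).card / ((p:ℝ) * L) := by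
    field_simp
  rw [e1]
  calc ((p:ℝ) - n) * ((Finset.Ico (0:ℤ) ((L:ℕ):ℤ)).filter (fun z : ℤ => (β : ℤ) ∣ (z - (r : ℤ)) ∧ ∀ i ∈ Finset.Icc 1 n, ∀ j : Fin m, k ≤ (j : ℕ) → ¬ (c j : ℤ) ∣ (z + (i : ℤ)))).card / ((p:ℝ) * L)
      ≤ ((p:ℝ) * ((Finset.Ico (0:ℤ) ((L:ℕ):ℤ)).filter (fun z : ℤ => (β : ℤ) ∣ (z - (r : ℤ)) ∧ ∀ i ∈ Finset.Icc 1 n, ∀ j : Fin m, ¬ (c j : ℤ) ∣ (z + (i : ℤ)))).card) / ((p:ℝ) * L) := by gcongr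
    _ = ((((Finset.Ico (0:ℤ) ((L:ℕ):ℤ)).filter (fun z : ℤ => (β : ℤ) ∣ (z - (r : ℤ)) ∧ ∀ i ∈ Finset.Icc 1 n, ∀ j : Fin m, ¬ (c j : ℤ) ∣ (z + (i : ℤ)))).card : ℕ) : ℝ) / L := by rw [mul_div_mul_left _ _ (ne_of_gt hp0)]
end
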